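/- arXiv:1209.1172 — 3 statements merged into one kernel-verified Lean document; each statement's English description precedes it below -/
import Mathlib

section
/- Let R = ⊕_{n≥0} R_n be a nonnegatively graded noetherian ℂ-algebra with R_0 finite-dimensional. Then the natural functor D^b(R-gmod_fd) → D^b(R-gmod) from the bounded derived category of finite-dimensional graded R-modules to the bounded derived category of finitely generated graded R-modules is fully faithful. -/
open DirectSum

set_option maxHeartbeats 1000000
set_option synthInstance.maxHeartbeats 200000
set_option linter.unusedSectionVars false
set_option linter.unusedVariables false
attribute [local instance] RestrictScalars.moduleOrig

instance rsACM {R S X : Type} [AddCommGroup X] : AddCommMonoid (RestrictScalars R S X) :=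
  AddCommGroup.toAddCommMonoid

instance rsModuleC {A X : Type} [Ring A] [Algebra ℂ A] [AddCommGroup X] [Module A X] :
    Module ℂ (RestrictScalars ℂ A X) :=
  RestrictScalars.module ℂ A X

instance rsModuleA {A X : Type} [Ring A] [Algebra ℂ A] [AddCommGroup X] [Module A X] :
    Module A (RestrictScalars ℂ A X) :=
  RestrictScalars.moduleOrig ℂ A X

instance rsTower {A X : Type} [Ring A] [Algebra ℂ A] [AddCommGroup X] [Module A X] :
    IsScalarTower ℂ A (RestrictScalars ℂ A X) :=
  RestrictScalars.isScalarTower ℂ A X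

section Pi
variable {M : Type} [AddCommMonoid M] {σ : Type*} [SetLike σ M] [AddSubmonoidClass σ M]

noncomputable def grpi (gr : ℤ → σ) (hint : DirectSum.IsInternal gr) (k : ℤ) : M →+ M :=
  letI := hint.chooseDecomposition
  (AddSubmonoidClass.subtype (gr k)).comp
    ((DFinsupp.evalAddMonoidHom k).comp (DirectSum.decomposeAddEquiv gr).toAddMonoidHom)

variable (gr : ℤ → σ) (hint : DirectSum.IsInternal gr)

theorem grpi_apply (k : ℤ) (m : M) :
    grpi gr hint k m =
      (letI := hint.chooseDecomposition; ((DirectSum.decompose gr m) k : M)) := rfl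

theorem grpi_mem (k : ℤ) (m : M) : grpi gr hint k m ∈ gr k := by
  rw [grpi_apply]
  exact SetLike.coe_mem _

theorem grpi_of_mem_same {k : ℤ} {m : M} (hm : m ∈ gr k) : grpi gr hint k m = m := by
  letI := hint.chooseDecomposition
  rw [grpi_apply]
  exact DirectSum.decompose_of_mem_same gr hm

theorem grpi_of_mem_ne {l k : ℤ} {m : M} (hm : m ∈ gr l) (h : l ≠ k) :
    grpi gr hint k m = 0 := by
  letI := hint.chooseDecomposition
  rw [grpi_apply]
  exact DirectSum.decompose_of_mem_ne gr hm h

theorem grpi_exists_support (m : M) : ∃ s : Finset ℤ,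
    (∀ k, k ∉ s → grpi gr hint k m = 0) ∧ ∑ k ∈ s, grpi gr hint k m = m := by
  classical
  letI := hint.chooseDecomposition
  refine ⟨DFinsupp.support (DirectSum.decompose gr m), fun k hk => ?_, ?_⟩
  · rw [grpi_apply]
    rw [DFinsupp.notMem_support_iff.mp hk]; rfl
  · conv_rhs => rw [← DirectSum.sum_support_decompose gr m]
    exact Finset.sum_congr rfl fun k _ => grpi_apply gr hint k m

theorem grpi_sum_piece (s : Finset ℤ) (y : ℤ → M) (hy : ∀ l ∈ s, y l ∈ gr l) (k : ℤ) :
    grpi gr hint k (∑ l ∈ s, y l) = if k ∈ s then y k else 0 := by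
  classical
  rw [map_sum]
  have : ∀ l ∈ s, grpi gr hint k (y l) = if k = l then y k else 0 := by
    intro l hl
    by_cases h : l = k
    · subst h; rw [if_pos rfl, grpi_of_mem_same gr hint (hy l hl)]
    · rw [if_neg (fun hh => h hh.symm), grpi_of_mem_ne gr hint (hy l hl) h]
  rw [Finset.sum_congr rfl this, Finset.sum_ite_eq s k (fun _ => y k)]

/-- components commute with grading-preserving additive maps -/
theorem grpi_comm {M' : Type} [AddCommMonoid M'] {σ' : Type*} [SetLike σ' M']
    [AddSubmonoidClass σ' M'] (gr' : ℤ → σ') (hint' : DirectSum.IsInternal gr')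
    (f : M →+ M') (hf : ∀ k m, m ∈ gr k → f m ∈ gr' k) (k : ℤ) (m : M) :
    grpi gr' hint' k (f m) = f (grpi gr hint k m) := by
  classical
  obtain ⟨s, h0, hsum⟩ := grpi_exists_support gr hint m
  conv_lhs => rw [← hsum]
  rw [map_sum, grpi_sum_piece gr' hint' s _ (fun l hl => hf l _ (grpi_mem gr hint l m)) k]
  by_cases h : k ∈ s
  · rw [if_pos h]
  · rw [if_neg h, h0 k h, map_zero]

end Pi

section Alg
variable {A : Type} [Ring A] [Algebra ℂ A] (𝒜 : ℤ → Submodule ℂ A) [GradedAlgebra 𝒜]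

noncomputable def hintA : DirectSum.IsInternal 𝒜 := DirectSum.Decomposition.isInternal 𝒜

theorem algebraMap_mem_A0 (c : ℂ) : algebraMap ℂ A c ∈ 𝒜 0 := by
  rw [Algebra.algebraMap_eq_smul_one]
  exact Submodule.smul_mem _ c (SetLike.one_mem_graded 𝒜)

variable {M : Type} [AddCommGroup M] [Module A M] {σM : Type*} [SetLike σM M]
  [AddSubgroupClass σM M]
variable (gr : ℤ → σM) (hint : DirectSum.IsInternal gr)
variable (hcompat : ∀ (j k : ℤ) (a : A) (m : M), a ∈ 𝒜 j → m ∈ gr k → a • m ∈ gr (j + k))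
include hcompat

/-- L1 : component of `a • x` for homogeneous `x`. -/
theorem grpi_smul_homog {l : ℤ} {x : M} (hx : x ∈ gr l) (a : A) (k : ℤ) :
    grpi gr hint k (a • x) = (grpi 𝒜 (hintA 𝒜) (k - l) a : A) • x := by
  classical
  obtain ⟨s, h0, hsum⟩ := grpi_exists_support 𝒜 (hintA 𝒜) a
  conv_lhs => rw [← hsum, Finset.sum_smul, map_sum]
  have key : ∀ j ∈ s, grpi gr hint k ((grpi 𝒜 (hintA 𝒜) j a : A) • x)
      = if k - l = j then (grpi 𝒜 (hintA 𝒜) (k - l) a : A) • x else 0 := by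
    intro j hj
    have hmem : (grpi 𝒜 (hintA 𝒜) j a : A) • x ∈ gr (j + l) :=
      hcompat j l _ x (grpi_mem 𝒜 (hintA 𝒜) j a) hx
    by_cases h : j = k - l
    · subst h
      rw [if_pos rfl, grpi_of_mem_same gr hint (by rwa [sub_add_cancel] at hmem)]
    · rw [if_neg (fun hh => h hh.symm),
        grpi_of_mem_ne gr hint hmem (fun hh => h (by omega))]
  rw [Finset.sum_congr rfl key, Finset.sum_ite_eq s (k - l)
    (fun _ => (grpi 𝒜 (hintA 𝒜) (k - l) a : A) • x)]
  by_cases h : k - l ∈ s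
  · rw [if_pos h]
  · rw [if_neg h, h0 _ h, zero_smul]

variable (hnonneg : ∀ n : ℤ, n < 0 → 𝒜 n = ⊥)
include hnonneg

/-- the submodule of elements whose components vanish on degrees satisfying `P`,
for `P` closed downward under subtracting nonnegatives. -/
def suppSubmodule (P : ℤ → Prop) (hP : ∀ j l : ℤ, 0 ≤ j → P (j + l) → P l) :
    Submodule A M where
  carrier := {m | ∀ k, P k → grpi gr hint k m = 0}
  add_mem' := by intro a b ha hb k hk; rw [map_add, ha k hk, hb k hk, add_zero]
  zero_mem' := by intro k _; rw [map_zero]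
  smul_mem' := by
    classical
    intro a m hm k hk
    obtain ⟨s, h0, hsum⟩ := grpi_exists_support gr hint m
    conv_lhs => rw [← hsum, Finset.smul_sum, map_sum]
    refine Finset.sum_eq_zero (fun l hl => ?_)
    rw [grpi_smul_homog 𝒜 gr hint hcompat (grpi_mem gr hint l m) a k]
    by_cases hPl : P l
    · rw [hm l hPl, smul_zero]
    · have hneg : k - l < 0 := by
        by_contra hc
        exact hPl (hP (k - l) l (by omega) (by rwa [sub_add_cancel]))
      have : (grpi 𝒜 (hintA 𝒜) (k - l) a : A) ∈ (⊥ : Submodule ℂ A) := by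
        rw [← hnonneg _ hneg]; exact grpi_mem _ _ _ _
      rw [Submodule.mem_bot] at this
      rw [this, zero_smul]

theorem mem_suppSubmodule_iff {P : ℤ → Prop} {hP : ∀ j l : ℤ, 0 ≤ j → P (j + l) → P l}
    {m : M} : m ∈ suppSubmodule 𝒜 gr hint hcompat hnonneg P hP ↔
      ∀ k, P k → grpi gr hint k m = 0 := Iff.rfl

theorem mem_suppSubmodule_of_homog {P : ℤ → Prop} {hP : ∀ j l : ℤ, 0 ≤ j → P (j + l) → P l}
    {l : ℤ} {m : M} (hm : m ∈ gr l) (hl : ¬ P l) :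
    m ∈ suppSubmodule 𝒜 gr hint hcompat hnonneg P hP := by
  intro k hk
  exact grpi_of_mem_ne gr hint hm (fun h => hl (h ▸ hk))

theorem grpi_mem_suppSubmodule {P : ℤ → Prop} {hP : ∀ j l : ℤ, 0 ≤ j → P (j + l) → P l}
    {m : M} (hm : m ∈ suppSubmodule 𝒜 gr hint hcompat hnonneg P hP) (k : ℤ) :
    grpi gr hint k m ∈ suppSubmodule 𝒜 gr hint hcompat hnonneg P hP := by
  intro k' hk'
  by_cases h : k' = k
  · subst h
    by_cases hPk : P k'
    · rw [hm k' hPk, map_zero]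
    · rw [grpi_of_mem_same gr hint (grpi_mem gr hint k' m)]
      exact hm k' hk'
  · exact grpi_of_mem_ne gr hint (grpi_mem gr hint k m) (fun hh => h hh.symm)

end Alg

section CLevel
variable {A : Type} [Ring A] [Algebra ℂ A] (𝒜 : ℤ → Submodule ℂ A) [GradedAlgebra 𝒜]
variable {M : Type} [AddCommGroup M] [Module A M] [Module ℂ M] [IsScalarTower ℂ A M]
variable {σM : Type*} [SetLike σM M] [AddSubgroupClass σM M]
variable (gr : ℤ → σM) (hint : DirectSum.IsInternal gr)
variable (hcompat : ∀ (j k : ℤ) (a : A) (m : M), a ∈ 𝒜 j → m ∈ gr k → a • m ∈ gr (j + k))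
include hcompat

theorem smul_C_mem {k : ℤ} {m : M} (c : ℂ) (hm : m ∈ gr k) : c • m ∈ gr k := by
  rw [← algebraMap_smul A c m, ← zero_add k]
  exact hcompat 0 k _ m (algebraMap_mem_A0 𝒜 c) hm

/-- the graded piece as a ℂ-subspace -/
def grC (k : ℤ) : Submodule ℂ M where
  carrier := gr k
  add_mem' := add_mem
  zero_mem' := zero_mem _
  smul_mem' := fun c m hm => smul_C_mem 𝒜 gr hcompat c hm

theorem mem_grC_iff {k : ℤ} {m : M} : m ∈ grC 𝒜 gr hcompat k ↔ m ∈ gr k := Iff.rfl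

include hint in
/-- (F) fd modules have grading bounded above -/
theorem exists_upper_bound_of_fd [Module.Finite ℂ M] :
    ∃ N : ℤ, ∀ k, N < k → ∀ m ∈ gr k, m = 0 := by
  classical
  set Sset : Set ℤ := {k | ∃ m ∈ gr k, m ≠ 0} with hSset
  have hfin : Sset.Finite := by
    have hv : ∀ k : Sset, ∃ m ∈ gr (k : ℤ), m ≠ 0 := fun k => k.2
    choose v hv1 hv2 using hv
    have hli : LinearIndependent ℂ v := by
      rw [linearIndependent_iff']
      intro s g hsum i hi
      have key : ∀ j ∈ s, grpi gr hint (i : ℤ) (g j • v j)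
          = if j = i then g i • v i else 0 := by
        intro j _
        have hmem : g j • v j ∈ gr (j : ℤ) := smul_C_mem 𝒜 gr hcompat (g j) (hv1 j)
        by_cases h : j = i
        · subst h; rw [if_pos rfl, grpi_of_mem_same gr hint hmem]
        · rw [if_neg h, grpi_of_mem_ne gr hint hmem
            (fun hh => h (Subtype.ext hh))]
      have h2 := map_sum (grpi gr hint (i : ℤ)) (fun j => g j • v j) s
      rw [hsum, map_zero, Finset.sum_congr rfl key,
        Finset.sum_ite_eq' s i (fun _ => g i • v i), if_pos hi] at h2
      rcases smul_eq_zero.mp h2.symm with h | h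
      · exact h
      · exact absurd h (hv2 i)
    have : Finite Sset := hli.finite
    exact Set.toFinite Sset
  obtain ⟨N, hN⟩ := hfin.bddAbove
  refine ⟨N, fun k hk m hm => ?_⟩
  by_contra hne
  exact absurd (hN (⟨m, hm, hne⟩ : k ∈ Sset)) (not_le.mpr hk)

include hint in
/-- (G) bounded gradings with fd pieces give fd modules -/
theorem fd_of_bounds (hfd : ∀ k, FiniteDimensional ℂ (grC 𝒜 gr hcompat k)) (b N : ℤ)
    (hb : ∀ k, k < b → ∀ m ∈ gr k, m = 0) (hN : ∀ k, N < k → ∀ m ∈ gr k, m = 0) :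
    Module.Finite ℂ M := by
  classical
  set W := (Finset.Icc b N).sup (grC 𝒜 gr hcompat) with hW
  haveI : ∀ k, FiniteDimensional ℂ (grC 𝒜 gr hcompat k) := hfd
  haveI hWfd : FiniteDimensional ℂ W := Submodule.finiteDimensional_finset_sup _ _
  have htop : W = ⊤ := by
    rw [eq_top_iff]
    intro m _
    obtain ⟨s, h0, hsum⟩ := grpi_exists_support gr hint m
    rw [← hsum]
    refine Submodule.sum_mem _ (fun k _ => ?_)
    by_cases hk : k ∈ Finset.Icc b N
    · exact Finset.le_sup (f := grC 𝒜 gr hcompat) hk (grpi_mem gr hint k m)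
    · rw [Finset.mem_Icc, not_and_or] at hk
      rcases hk with hk | hk
      · rw [hb k (by omega) _ (grpi_mem gr hint k m)]; exact zero_mem _
      · rw [hN k (by omega) _ (grpi_mem gr hint k m)]; exact zero_mem _
  rw [htop] at hWfd
  exact Module.Finite.equiv (Submodule.topEquiv)

end CLevel

section NoethA
variable {A : Type} [Ring A] [Algebra ℂ A] (𝒜 : ℤ → Submodule ℂ A) [GradedAlgebra 𝒜]

theorem hcompatA : ∀ (j k : ℤ) (a m : A), a ∈ 𝒜 j → m ∈ 𝒜 k → a • m ∈ 𝒜 (j + k) :=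
  fun _ _ a m hj hk => by rw [smul_eq_mul]; exact SetLike.mul_mem_graded hj hk

variable (hnonneg : ∀ n : ℤ, n < 0 → 𝒜 n = ⊥)
include hnonneg

theorem fd_A_pieces [IsNoetherianRing A] (hfd0 : FiniteDimensional ℂ (𝒜 0)) :
    ∀ s : ℤ, FiniteDimensional ℂ (𝒜 s) := by
  classical
  set hA := hintA 𝒜 with hhA
  set I : Submodule A A := suppSubmodule 𝒜 𝒜 hA (hcompatA 𝒜) hnonneg (fun k => k ≤ 0)
    (fun j l hj hjl => by omega) with hI
  obtain ⟨T, hT⟩ := IsNoetherian.noetherian I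
  have main : ∀ n : ℕ, ∀ s : ℤ, s ≤ (n : ℤ) → FiniteDimensional ℂ (𝒜 s) := by
    intro n
    induction n with
    | zero =>
      intro s hs
      rcases eq_or_lt_of_le hs with h | h
      · rw [h]; exact hfd0
      · rw [hnonneg s (by exact_mod_cast h)]; infer_instance
    | succ n ih =>
      intro s hs
      by_cases hsn : s ≤ (n : ℤ)
      · exact ih s hsn
      have hs1 : 1 ≤ s := by omega
      set f : A × ℤ → Submodule ℂ A := fun p =>
        if 1 ≤ p.2 ∧ p.2 ≤ s then
          Submodule.map (LinearMap.mulRight ℂ ((grpi 𝒜 hA p.2 p.1 : A))) (𝒜 (s - p.2))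
        else ⊥ with hf
      haveI hfdf : ∀ p, FiniteDimensional ℂ (f p) := by
        intro p
        by_cases h : 1 ≤ p.2 ∧ p.2 ≤ s
        · haveI := ih (s - p.2) (by omega)
          show FiniteDimensional ℂ (if 1 ≤ p.2 ∧ p.2 ≤ s then _ else ⊥ : Submodule ℂ A)
          rw [if_pos h]; infer_instance
        · show FiniteDimensional ℂ (if 1 ≤ p.2 ∧ p.2 ≤ s then _ else ⊥ : Submodule ℂ A)
          rw [if_neg h]; infer_instance
      set W := (T ×ˢ Finset.Icc 1 s).sup f with hWdef
      have hle : 𝒜 s ≤ W := by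
        intro v hv
        have hvI : v ∈ I := mem_suppSubmodule_of_homog 𝒜 𝒜 hA (hcompatA 𝒜) hnonneg
          (l := s) hv (by omega)
        have hvsp : v ∈ Submodule.span A (↑T : Set A) := by rw [hT]; exact hvI
        obtain ⟨c, hcsupp, hcsum⟩ := Submodule.mem_span_set.mp hvsp
        have hv2 : v = grpi 𝒜 hA s v := (grpi_of_mem_same 𝒜 hA hv).symm
        rw [hv2, ← hcsum, Finsupp.sum, map_sum]
        refine Submodule.sum_mem _ (fun y hy => ?_)
        obtain ⟨sy, hy0, hysum⟩ := grpi_exists_support 𝒜 hA y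
        have hexp : c y • y = ∑ l ∈ sy, c y • (grpi 𝒜 hA l y : A) := by
          rw [← Finset.smul_sum, hysum]
        rw [hexp, map_sum]
        refine Submodule.sum_mem _ (fun l hl => ?_)
        rw [grpi_smul_homog 𝒜 𝒜 hA (hcompatA 𝒜) (grpi_mem 𝒜 hA l y) (c y) s]
        by_cases h1 : 1 ≤ l ∧ l ≤ s
        · have hyT : y ∈ T := Finset.mem_coe.mp (hcsupp hy)
          refine Finset.le_sup (f := f)
            (show (y, l) ∈ T ×ˢ Finset.Icc 1 s from
              Finset.mem_product.mpr ⟨hyT, Finset.mem_Icc.mpr h1⟩) ?_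
          show _ ∈ (if 1 ≤ l ∧ l ≤ s then
            Submodule.map (LinearMap.mulRight ℂ ((grpi 𝒜 hA l y : A))) (𝒜 (s - l))
            else ⊥ : Submodule ℂ A)
          rw [if_pos h1]
          exact ⟨grpi 𝒜 hA (s - l) (c y), grpi_mem 𝒜 hA (s - l) (c y),
            by rw [LinearMap.mulRight_apply, ← smul_eq_mul]⟩
        · rcases not_and_or.mp h1 with h | h
          · have hyI : (y : A) ∈ I := hT ▸ Submodule.subset_span (hcsupp hy)
            have := (mem_suppSubmodule_iff 𝒜 𝒜 hA (hcompatA 𝒜) hnonneg).mp hyI l (by omega)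
            rw [this, smul_zero]
            exact zero_mem _
          · have hbot : (grpi 𝒜 hA (s - l) (c y) : A) ∈ (⊥ : Submodule ℂ A) :=
              hnonneg (s - l) (by omega) ▸ grpi_mem 𝒜 hA (s - l) (c y)
            rw [(Submodule.mem_bot ℂ).mp hbot, zero_smul]
            exact zero_mem _
      haveI : FiniteDimensional ℂ W := Submodule.finiteDimensional_finset_sup _ _
      exact Submodule.finiteDimensional_of_le hle
  intro s
  rcases le_or_gt s 0 with h | h
  · exact main 0 s (by exact_mod_cast h)
  · exact main s.toNat s (Int.self_le_toNat s)

end NoethA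

section FGModule
variable {A : Type} [Ring A] [Algebra ℂ A] (𝒜 : ℤ → Submodule ℂ A) [GradedAlgebra 𝒜]
variable {M : Type} [AddCommGroup M] [Module A M] [Module ℂ M] [IsScalarTower ℂ A M]
variable {σM : Type*} [SetLike σM M] [AddSubgroupClass σM M]

/-- `a ↦ a • x` as a ℂ-linear map -/
def smulMapC (x : M) : A →ₗ[ℂ] M where
  toFun a := a • x
  map_add' a b := add_smul a b x
  map_smul' c a := smul_assoc c a x

variable (gr : ℤ → σM) (hint : DirectSum.IsInternal gr)
variable (hcompat : ∀ (j k : ℤ) (a : A) (m : M), a ∈ 𝒜 j → m ∈ gr k → a • m ∈ gr (j + k))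
variable (hnonneg : ∀ n : ℤ, n < 0 → 𝒜 n = ⊥)
include hcompat hnonneg hint

/-- (E) graded pieces of finitely generated graded modules are finite-dimensional -/
theorem grC_fd_of_fg [IsNoetherianRing A] (hfd0 : FiniteDimensional ℂ (𝒜 0))
    (hfg : Module.Finite A M) : ∀ k, FiniteDimensional ℂ (grC 𝒜 gr hcompat k) := by
  classical
  intro k
  have hAfd := fd_A_pieces 𝒜 hnonneg hfd0
  obtain ⟨T, hT⟩ := hfg.fg_top
  set sy : M → Finset ℤ := fun y => (grpi_exists_support gr hint y).choose with hsy
  set sAll := T.sup sy with hsAll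
  set f : M × ℤ → Submodule ℂ M := fun p =>
    Submodule.map (smulMapC (A := A) (grpi gr hint p.2 p.1)) (𝒜 (k - p.2)) with hf
  haveI hfdf : ∀ p : M × ℤ, FiniteDimensional ℂ (f p) := by
    intro p
    haveI := hAfd (k - p.2)
    show FiniteDimensional ℂ
      (Submodule.map (smulMapC (A := A) (grpi gr hint p.2 p.1)) (𝒜 (k - p.2)))
    infer_instance
  set W := (T ×ˢ sAll).sup f with hW
  have hle : grC 𝒜 gr hcompat k ≤ W := by
    intro v hv
    have hvsp : v ∈ Submodule.span A (↑T : Set M) := by rw [hT]; trivial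
    obtain ⟨c, hcsupp, hcsum⟩ := Submodule.mem_span_set.mp hvsp
    have hv2 : v = grpi gr hint k v := (grpi_of_mem_same gr hint hv).symm
    rw [hv2, ← hcsum, Finsupp.sum, map_sum]
    refine Submodule.sum_mem _ (fun y hy => ?_)
    have hysum : ∑ l ∈ sy y, grpi gr hint l y = y :=
      (grpi_exists_support gr hint y).choose_spec.2
    have hexp : c y • y = ∑ l ∈ sy y, c y • grpi gr hint l y := by
      rw [← Finset.smul_sum, hysum]
    rw [hexp, map_sum]
    refine Submodule.sum_mem _ (fun l hl => ?_)
    rw [grpi_smul_homog 𝒜 gr hint hcompat (grpi_mem gr hint l y) (c y) k]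
    have hyT : y ∈ T := Finset.mem_coe.mp (hcsupp hy)
    have hlAll : l ∈ sAll := Finset.le_sup (f := sy) hyT hl
    refine Finset.le_sup (f := f)
      (show (y, l) ∈ T ×ˢ sAll from Finset.mem_product.mpr ⟨hyT, hlAll⟩) ?_
    show _ ∈ Submodule.map (smulMapC (A := A) (grpi gr hint l y)) (𝒜 (k - l))
    exact Submodule.mem_map.mpr
      ⟨grpi 𝒜 (hintA 𝒜) (k - l) (c y), grpi_mem 𝒜 (hintA 𝒜) (k - l) (c y), rfl⟩
  haveI : FiniteDimensional ℂ W := Submodule.finiteDimensional_finset_sup _ _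
  exact Submodule.finiteDimensional_of_le hle

/-- (C) the grading of a finitely generated graded module is bounded below -/
theorem exists_lower_bound (hfg : Module.Finite A M) :
    ∃ b : ℤ, ∀ k, k < b → ∀ m ∈ gr k, m = 0 := by
  classical
  obtain ⟨T, hT⟩ := hfg.fg_top
  set sy : M → Finset ℤ := fun y => (grpi_exists_support gr hint y).choose with hsy
  set sAll := T.sup sy with hsAll
  obtain ⟨B, hB⟩ := Finset.exists_le (sAll.image (fun l => -l))
  set U := suppSubmodule 𝒜 gr hint hcompat hnonneg (fun k => k < -B)
    (fun j l hj hjl => by omega) with hU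
  have hTU : (↑T : Set M) ⊆ U := by
    intro y hyT k hk
    by_cases hmem : k ∈ sy y
    · exfalso
      have : k ∈ sAll := Finset.le_sup (f := sy) hyT hmem
      have := hB (-k) (Finset.mem_image_of_mem _ this)
      omega
    · exact (grpi_exists_support gr hint y).choose_spec.1 k hmem
  have hUtop : ∀ m : M, m ∈ U := by
    intro m
    have : Submodule.span A (↑T : Set M) ≤ U := Submodule.span_le.mpr hTU
    rw [hT] at this
    exact this trivial
  refine ⟨-B, fun k hk m hm => ?_⟩
  rw [← grpi_of_mem_same gr hint hm]
  exact hUtop m k hk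

end FGModule

section Descend
variable {A : Type} [Ring A]
variable {M M' M₂ : Type} [AddCommGroup M] [Module A M] [AddCommGroup M'] [Module A M']
  [AddCommGroup M₂] [Module A M₂]

/-- descend a linear map along a surjection on whose kernel it vanishes -/
noncomputable def descend (q : M →ₗ[A] M') (hq : Function.Surjective q) (f : M →ₗ[A] M₂)
    (h : ∀ m, q m = 0 → f m = 0) : M' →ₗ[A] M₂ :=
  (Submodule.liftQ (LinearMap.ker q) f
    (fun m hm => h m (LinearMap.mem_ker.mp hm))).comp
    (q.quotKerEquivOfSurjective hq).symm.toLinearMap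

theorem descend_apply (q : M →ₗ[A] M') (hq : Function.Surjective q) (f : M →ₗ[A] M₂)
    (h : ∀ m, q m = 0 → f m = 0) (m : M) : descend q hq f h (q m) = f m := by
  have h1 : (q.quotKerEquivOfSurjective hq).symm (q m) = Submodule.Quotient.mk m := by
    rw [LinearEquiv.symm_apply_eq]
    simp [LinearMap.quotKerEquivOfSurjective, LinearMap.quotKerEquivRange]
  rw [descend, LinearMap.comp_apply]
  show Submodule.liftQ _ _ _ ((q.quotKerEquivOfSurjective hq).symm (q m)) = f m
  rw [h1]
  exact Submodule.liftQ_apply _ f m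

end Descend

section QuotGrading
variable {A : Type} [Ring A] [Algebra ℂ A] (𝒜 : ℤ → Submodule ℂ A) [GradedAlgebra 𝒜]
variable {M M' : Type} [AddCommGroup M] [Module A M] [AddCommGroup M'] [Module A M']
variable (gr : ℤ → AddSubgroup M) (hint : DirectSum.IsInternal gr)
variable (q : M →ₗ[A] M') (hq : Function.Surjective q)
variable (hgrK : ∀ m, q m = 0 → ∀ k, q (grpi gr hint k m) = 0)

/-- the quotient grading -/
def quotGr (k : ℤ) : AddSubgroup M' := (gr k).map q.toAddMonoidHom

theorem mem_quotGr {k : ℤ} {m' : M'} :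
    m' ∈ quotGr gr q k ↔ ∃ m ∈ gr k, q m = m' := Iff.rfl

include hint hq hgrK in
theorem quotGr_internal : DirectSum.IsInternal (quotGr gr q) := by
  classical
  constructor
  · rw [injective_iff_map_eq_zero]
    intro x hx
    have hlift : ∀ k : ℤ, ∃ m : M, (x k : M') = q m ∧ (x k ≠ 0 → m ∈ gr k) := by
      intro k
      by_cases h : x k = 0
      · exact ⟨0, by rw [h, map_zero]; rfl, fun hc => absurd h hc⟩
      · obtain ⟨m, hm, hqm⟩ := (x k).2
        exact ⟨m, hqm.symm, fun _ => hm⟩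
    choose y hy1 hy2 using hlift
    set m := ∑ k ∈ DFinsupp.support x, y k with hm
    have hqm : q m = 0 := by
      rw [hm, map_sum]
      have : ∀ k ∈ DFinsupp.support x, q (y k) = (x k : M') :=
        fun k _ => (hy1 k).symm
      rw [Finset.sum_congr rfl this]
      calc ∑ k ∈ DFinsupp.support x, (x k : M')
          = DirectSum.coeAddMonoidHom (quotGr gr q) x := by
            conv_rhs => rw [← DirectSum.sum_support_of x]
            rw [map_sum]
            exact (Finset.sum_congr rfl (fun k _ =>
              (DirectSum.coeAddMonoidHom_of (quotGr gr q) k (x k)).symm))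
        _ = 0 := hx
    apply DFinsupp.ext
    intro k
    by_cases hk : k ∈ DFinsupp.support x
    · apply Subtype.ext
      have hpick : grpi gr hint k m = y k := by
        rw [hm, grpi_sum_piece gr hint _ y (fun l hl => hy2 l (DFinsupp.mem_support_iff.mp hl)),
          if_pos hk]
      have := hgrK m hqm k
      rw [hpick] at this
      rw [← hy1 k] at this
      exact this
    · exact DFinsupp.notMem_support_iff.mp hk
  · intro m'
    obtain ⟨m, rfl⟩ := hq m'
    obtain ⟨s, h0, hsum⟩ := grpi_exists_support gr hint m
    refine ⟨∑ k ∈ s, DirectSum.of (fun i => (quotGr gr q i)) k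
      ⟨q (grpi gr hint k m), ⟨grpi gr hint k m, grpi_mem gr hint k m, rfl⟩⟩, ?_⟩
    rw [map_sum]
    have : ∀ k ∈ s, DirectSum.coeAddMonoidHom (quotGr gr q)
        (DirectSum.of (fun i => (quotGr gr q i)) k
          ⟨q (grpi gr hint k m), ⟨grpi gr hint k m, grpi_mem gr hint k m, rfl⟩⟩)
        = q (grpi gr hint k m) :=
      fun k _ => DirectSum.coeAddMonoidHom_of _ _ _
    rw [Finset.sum_congr rfl this, ← map_sum, hsum]

theorem quotGr_compat
    (hcompat : ∀ (j k : ℤ) (a : A) (m : M), a ∈ 𝒜 j → m ∈ gr k → a • m ∈ gr (j + k)) :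
    ∀ (j k : ℤ) (a : A) (m' : M'), a ∈ 𝒜 j → m' ∈ quotGr gr q k →
      a • m' ∈ quotGr gr q (j + k) := by
  rintro j k a m' hj ⟨m, hm, rfl⟩
  exact ⟨a • m, hcompat j k a m hj hm, map_smul q a m⟩

end QuotGrading

open CategoryTheory

/-- An exact sequence `0 → B → Mⁱ → ⋯ → M¹ → A* → 0` of finitely generated graded modules
over a graded ℂ-algebra `A`, encoded as `X (i+1) = B`, `X i = Mⁱ, …, X 1 = M¹, X 0 = A*`,
together with the grading data on each term. -/
structure GradedSeq (A : Type) [Ring A] [Algebra ℂ A] (𝒜 : ℤ → Submodule ℂ A)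
    (i : ℕ) where
  X : ℕ → ModuleCat.{0} A
  d : ∀ n : ℕ, X (n + 1) ⟶ X n
  gr : ∀ n : ℕ, ℤ → AddSubgroup (X n)
  internal : ∀ n : ℕ, DirectSum.IsInternal (gr n)
  compat : ∀ (n : ℕ) (j k : ℤ) (a : A) (m : X n),
    a ∈ 𝒜 j → m ∈ gr n k → a • m ∈ gr n (j + k)
  dgr : ∀ (n : ℕ) (k : ℤ) (m : X (n + 1)), m ∈ gr (n + 1) k → d n m ∈ gr n k
  fg : ∀ n : ℕ, Module.Finite A (X n)
  inj : Function.Injective ⇑(d i)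
  surj : Function.Surjective ⇑(d 0)
  exact : ∀ n : ℕ, n < i → Function.Exact ⇑(d (n + 1)) ⇑(d n)

/-- A graded sequence is finite-dimensional if all of its terms are finite-dimensional
over ℂ. -/
def GradedSeq.IsFD {A : Type} [Ring A] [Algebra ℂ A] {𝒜 : ℤ → Submodule ℂ A} {i : ℕ}
    (S : GradedSeq A 𝒜 i) : Prop :=
  ∀ n : ℕ, @FiniteDimensional ℂ (RestrictScalars ℂ A (S.X n)) _ _ (RestrictScalars.module ℂ A (S.X n))

/-- A morphism of exact sequences which is the identity on the two end terms (including
their gradings); this is the elementary relation generating equivalence of Yoneda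
extensions. -/
def GradedSeq.Mor {A : Type} [Ring A] [Algebra ℂ A] {𝒜 : ℤ → Submodule ℂ A} {i : ℕ}
    (S T : GradedSeq A 𝒜 i) : Prop :=
  ∃ (h0 : S.X 0 = T.X 0) (htop : S.X (i + 1) = T.X (i + 1))
    (φ : ∀ n : ℕ, S.X n ⟶ T.X n),
    (∀ n : ℕ, S.d n ≫ φ n = φ (n + 1) ≫ T.d n) ∧
    (∀ (n : ℕ) (k : ℤ) (m : S.X n), m ∈ S.gr n k → φ n m ∈ T.gr n k) ∧
    φ 0 = eqToHom h0 ∧ φ (i + 1) = eqToHom htop ∧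
    (∀ k : ℤ, AddSubgroup.map (LinearMap.toAddMonoidHom (eqToHom h0 : S.X 0 ⟶ T.X 0).hom)
        (S.gr 0 k) = T.gr 0 k) ∧
    (∀ k : ℤ, AddSubgroup.map
        (LinearMap.toAddMonoidHom (eqToHom htop : S.X (i + 1) ⟶ T.X (i + 1)).hom)
        (S.gr (i + 1) k) = T.gr (i + 1) k)


section Trunc
variable {A : Type} [Ring A] [Algebra ℂ A] {𝒜 : ℤ → Submodule ℂ A} [GradedAlgebra 𝒜]
variable {i : ℕ}

theorem eqToHom_bij {X Y : ModuleCat.{0} A} (h : X = Y) :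
    Function.Bijective ⇑(eqToHom h) := by
  subst h
  simp only [eqToHom_refl]
  exact Function.bijective_id

/-- data for truncating a graded sequence -/
structure TruncData (S : GradedSeq A 𝒜 i) where
  C : ∀ n : ℕ, Submodule A (S.X n)
  hC0 : C 0 = ⊥
  hCtop : C (i + 1) = ⊥
  hCbig : ∀ n, i + 2 ≤ n → C n = ⊤
  hCgr : ∀ n k m, m ∈ C n → grpi (S.gr n) (S.internal n) k m ∈ C n
  hd : ∀ n, n ≤ i → ∀ m ∈ C (n + 1), S.d n m ∈ C n
  hinj : ∀ m, S.d i m ∈ C i → m = 0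
  hexact : ∀ n, n < i → ∀ y, S.d n y ∈ C n →
    y ∈ LinearMap.range (S.d (n + 1)).hom ⊔ C (n + 1)

variable {S : GradedSeq A 𝒜 i} (D : TruncData S)

def tX (n : ℕ) : ModuleCat.{0} A :=
  if n = 0 ∨ n = i + 1 then S.X n else ModuleCat.of A ((S.X n) ⧸ D.C n)

theorem tX_end {n : ℕ} (h : n = 0 ∨ n = i + 1) : tX D n = S.X n := if_pos h

theorem tX_mid {n : ℕ} (h : ¬(n = 0 ∨ n = i + 1)) :
    tX D n = ModuleCat.of A ((S.X n) ⧸ D.C n) := if_neg h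

noncomputable def Qmap (n : ℕ) : S.X n ⟶ tX D n :=
  if h : n = 0 ∨ n = i + 1 then eqToHom (tX_end D h).symm
  else ModuleCat.ofHom (D.C n).mkQ ≫ eqToHom (tX_mid D h).symm

theorem Q_surj (n : ℕ) : Function.Surjective ⇑(Qmap D n) := by
  rw [Qmap]
  by_cases h : n = 0 ∨ n = i + 1
  · rw [dif_pos h]; exact (eqToHom_bij _).2
  · rw [dif_neg h]
    exact Function.Surjective.comp (g := ⇑(eqToHom (tX_mid D h).symm))
      (eqToHom_bij _).2 (Submodule.mkQ_surjective _)

theorem Q_zero_iff (n : ℕ) (m : S.X n) : Qmap D n m = 0 ↔ m ∈ D.C n := by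
  rw [Qmap]
  by_cases h : n = 0 ∨ n = i + 1
  · rw [dif_pos h]
    constructor
    · intro hz
      have : (eqToHom (tX_end D h).symm) m = (eqToHom (tX_end D h).symm) 0 := by
        rw [hz, map_zero]
      have hm0 := (eqToHom_bij ((tX_end D h).symm)).1 this
      rcases h with h | h
      · rw [hm0]; rw [h, D.hC0]; trivial
      · rw [hm0]; rw [h, D.hCtop]; trivial
    · intro hm
      rcases h with h | h
      · subst h; rw [D.hC0] at hm; rw [(Submodule.mem_bot A).mp hm, map_zero]
      · subst h; rw [D.hCtop] at hm; rw [(Submodule.mem_bot A).mp hm, map_zero]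
  · rw [dif_neg h]
    show (eqToHom (tX_mid D h).symm) ((D.C n).mkQ m) = 0 ↔ _
    constructor
    · intro hz
      have : (eqToHom (tX_mid D h).symm) ((D.C n).mkQ m)
          = (eqToHom (tX_mid D h).symm) 0 := by rw [hz, map_zero]
      have := (eqToHom_bij ((tX_mid D h).symm)).1 this
      rwa [Submodule.mkQ_apply, Submodule.Quotient.mk_eq_zero] at this
    · intro hm
      rw [Submodule.mkQ_apply, (Submodule.Quotient.mk_eq_zero _).mpr hm, map_zero]

theorem Q_grK (n : ℕ) : ∀ m, Qmap D n m = 0 → ∀ k,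
    Qmap D n (grpi (S.gr n) (S.internal n) k m) = 0 := by
  intro m hm k
  rw [Q_zero_iff] at *
  exact D.hCgr n k m hm

noncomputable def tgr (n : ℕ) (k : ℤ) : AddSubgroup (tX D n) := quotGr (S.gr n) (Qmap D n).hom k

theorem tgr_internal (n : ℕ) : DirectSum.IsInternal (tgr D n) :=
  quotGr_internal (S.gr n) (S.internal n) (Qmap D n).hom (Q_surj D n) (Q_grK D n)

noncomputable def td (n : ℕ) : tX D (n + 1) ⟶ tX D n :=
  if h : n ≤ i then
    ModuleCat.ofHom (descend (Qmap D (n + 1)).hom (Q_surj D (n + 1)) (S.d n ≫ Qmap D n).hom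
      (fun m hm => by
        show Qmap D n (S.d n m) = 0
        rw [Q_zero_iff]
        exact D.hd n h m ((Q_zero_iff D (n + 1) m).mp hm)))
  else 0

theorem td_comm {n : ℕ} (h : n ≤ i) (m : S.X (n + 1)) :
    td D n (Qmap D (n + 1) m) = Qmap D n (S.d n m) := by
  rw [show td D n = _ from dif_pos h]
  exact descend_apply (Qmap D (n + 1)).hom (Q_surj D (n + 1)) (S.d n ≫ Qmap D n).hom
    (fun m hm => by
      show Qmap D n (S.d n m) = 0
      rw [Q_zero_iff]
      exact D.hd n h m ((Q_zero_iff D (n + 1) m).mp hm)) m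

theorem td_zero {n : ℕ} (h : ¬ n ≤ i) : td D n = 0 := by exact dif_neg h

noncomputable def TruncSeq : GradedSeq A 𝒜 i where
  X := tX D
  d := td D
  gr := tgr D
  internal := tgr_internal D
  compat := fun n j k a m hj hm =>
    quotGr_compat 𝒜 (S.gr n) (Qmap D n).hom (fun j' k' a' m' => S.compat n j' k' a' m') j k a m hj hm
  dgr := by
    intro n k m hm
    by_cases h : n ≤ i
    · obtain ⟨m₀, hm₀, rfl⟩ := hm
      show td D n (Qmap D (n+1) m₀) ∈ tgr D n k
      rw [td_comm D h]
      exact ⟨S.d n m₀, S.dgr n k m₀ hm₀, rfl⟩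
    · rw [td_zero D h]
      show (0 : tX D (n+1) ⟶ tX D n).hom m ∈ tgr D n k
      rw [ModuleCat.hom_zero, LinearMap.zero_apply]
      exact zero_mem _
  fg := by
    intro n
    by_cases h : n = 0 ∨ n = i + 1
    · rw [tX_end D h]; exact S.fg n
    · rw [tX_mid D h]
      haveI := S.fg n
      exact Module.Finite.quotient A (D.C n)
  inj := by
    rw [injective_iff_map_eq_zero]
    intro x hx
    obtain ⟨m, rfl⟩ := Q_surj D (i + 1) x
    rw [show td D i (Qmap D (i+1) m) = Qmap D i (S.d i m) from td_comm D le_rfl m,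
      Q_zero_iff] at hx
    rw [D.hinj m hx, map_zero]
  surj := by
    intro y
    obtain ⟨z, rfl⟩ := Q_surj D 0 y
    obtain ⟨w, rfl⟩ := S.surj z
    exact ⟨Qmap D 1 w, td_comm D (by omega) w⟩
  exact := by
    intro n hn y
    constructor
    · intro hy
      obtain ⟨m, rfl⟩ := Q_surj D (n + 1) y
      rw [td_comm D (by omega), Q_zero_iff] at hy
      obtain ⟨u, hu, c, hc, hsum⟩ := Submodule.mem_sup.mp (D.hexact n hn m hy)
      obtain ⟨z, rfl⟩ := hu
      refine ⟨Qmap D (n + 2) z, ?_⟩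
      rw [td_comm D (by omega), ← hsum, map_add,
        (Q_zero_iff D (n+1) c).mpr hc, add_zero]
    · rintro ⟨x, rfl⟩
      obtain ⟨v, rfl⟩ := Q_surj D (n + 2) x
      rw [td_comm D (by omega), td_comm D (by omega),
        (S.exact n hn).apply_apply_eq_zero v, map_zero]

end Trunc

section Morphisms
variable {A : Type} [Ring A] [Algebra ℂ A] {𝒜 : ℤ → Submodule ℂ A} [GradedAlgebra 𝒜]
variable {i : ℕ}

theorem hom_ext {X Y : ModuleCat.{0} A} {f g : X ⟶ Y} (h : ∀ x, f x = g x) : f = g :=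
  ModuleCat.hom_ext (LinearMap.ext h)

theorem eqToHom_comp_apply {X Y Z : ModuleCat.{0} A} (h : X = Y) (h' : Y = Z) (x : X) :
    eqToHom h' (eqToHom h x) = eqToHom (h.trans h') x := by subst h h'; rfl

theorem eqToHom_self_apply {X : ModuleCat.{0} A} (h : X = X) (x : X) :
    eqToHom h x = x := rfl

theorem map_eqToHom_self {X : ModuleCat.{0} A} (h : X = X) (G : AddSubgroup X) :
    AddSubgroup.map (LinearMap.toAddMonoidHom (eqToHom h : X ⟶ X).hom) G = G := by
  apply le_antisymm
  · rintro x ⟨z, hz, rfl⟩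
    exact hz
  · intro x hx
    exact ⟨x, hx, rfl⟩

theorem map_eqToHom_map {X Y Z : ModuleCat.{0} A} (h : X = Y) (h' : Y = Z)
    (G : AddSubgroup X) :
    AddSubgroup.map (LinearMap.toAddMonoidHom (eqToHom h' : Y ⟶ Z).hom)
      (AddSubgroup.map (LinearMap.toAddMonoidHom (eqToHom h : X ⟶ Y).hom) G)
    = AddSubgroup.map (LinearMap.toAddMonoidHom (eqToHom (h.trans h') : X ⟶ Z).hom) G := by
  subst h h'
  rw [map_eqToHom_self, map_eqToHom_self]

variable {S : GradedSeq A 𝒜 i}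

def botC (S : GradedSeq A 𝒜 i) (n : ℕ) : Submodule A (S.X n) :=
  if n ≤ i + 1 then ⊥ else ⊤

/-- the data truncating by zero (and collapsing junk above `i+1`) -/
def botData (S : GradedSeq A 𝒜 i) : TruncData S where
  C := botC S
  hC0 := if_pos (by omega)
  hCtop := if_pos (by omega)
  hCbig n hn := if_neg (by omega)
  hCgr := by
    intro n k m hm
    rw [botC] at *
    by_cases h : n ≤ i + 1
    · rw [if_pos h] at *
      rw [(Submodule.mem_bot A).mp hm, map_zero]; trivial
    · rw [if_neg h]; trivial
  hd := by
    intro n hn m hm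
    rw [botC, if_pos (by omega : n + 1 ≤ i + 1)] at hm
    rw [botC, if_pos (by omega : n ≤ i + 1), (Submodule.mem_bot A).mp hm, map_zero]
    trivial
  hinj := by
    intro m hm
    rw [botC, if_pos (by omega : i ≤ i + 1)] at hm
    apply S.inj
    rw [(Submodule.mem_bot A).mp hm, map_zero]
  hexact := by
    intro n hn y hy
    rw [botC, if_pos (by omega : n ≤ i + 1)] at hy
    have := (S.exact n hn y).mp ((Submodule.mem_bot A).mp hy)
    exact Submodule.mem_sup_left this

theorem bot_C_eq_bot {n : ℕ} (h : n ≤ i + 1) : (botData S).C n = ⊥ := by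
  show botC S n = ⊥
  rw [botC, if_pos h]

theorem Qmap_bot_bij {n : ℕ} (h : n ≤ i + 1) :
    Function.Bijective ⇑(Qmap (botData S) n) := by
  constructor
  · rw [injective_iff_map_eq_zero]
    intro m hm
    have := (Q_zero_iff (botData S) n m).mp hm
    rw [bot_C_eq_bot h] at this
    exact (Submodule.mem_bot A).mp this
  · exact Q_surj _ n

/-- inverse of Qmap for the bot truncation -/
noncomputable def botInv (n : ℕ) : tX (botData S) n ⟶ S.X n :=
  if h : n ≤ i + 1 then
    ModuleCat.ofHom ((LinearEquiv.ofBijective (Qmap (botData S) n).hom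
      (Qmap_bot_bij h)).symm : tX (botData S) n →ₗ[A] S.X n)
  else 0

theorem botInv_apply {n : ℕ} (h : n ≤ i + 1) (m : S.X n) :
    botInv n (Qmap (botData S) n m) = m := by
  rw [show botInv (S := S) n = _ from dif_pos h]
  exact (LinearEquiv.ofBijective _ (Qmap_bot_bij h)).symm_apply_apply m

theorem mor_bot : GradedSeq.Mor (TruncSeq (botData S)) S := by
  have h0 : tX (botData S) 0 = S.X 0 := tX_end _ (Or.inl rfl)
  have htop : tX (botData S) (i + 1) = S.X (i + 1) := tX_end _ (Or.inr rfl)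
  refine ⟨h0, htop, botInv, ?_, ?_, ?_, ?_, ?_, ?_⟩
  · -- squares
    intro n
    apply hom_ext
    intro x
    show botInv n (td (botData S) n x) = S.d n (botInv (n + 1) x)
    by_cases h : n ≤ i
    · obtain ⟨m, rfl⟩ := Q_surj (botData S) (n + 1) x
      rw [td_comm _ h, botInv_apply (by omega), botInv_apply (by omega)]
    · rw [td_zero _ h]
      have h1 : botInv (S := S) (n + 1) = 0 := by
        exact dif_neg (by omega : ¬ n + 1 ≤ i + 1)
      rw [h1]
      show botInv n 0 = S.d n ((0 : tX (botData S) (n + 1) ⟶ S.X (n + 1)).hom x)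
      rw [map_zero]; exact (map_zero (S.d n).hom).symm
  · -- gradings
    intro n k m hm
    by_cases h : n ≤ i + 1
    · obtain ⟨m₀, hm₀, rfl⟩ := hm
      show botInv n (Qmap (botData S) n m₀) ∈ _
      rw [botInv_apply h]
      exact hm₀
    · rw [show botInv (S := S) n = 0 from dif_neg h]
      exact zero_mem _
  · apply hom_ext
    intro x
    obtain ⟨m, rfl⟩ := Q_surj (botData S) 0 x
    rw [botInv_apply (by omega)]
    show m = eqToHom h0 (Qmap (botData S) 0 m)
    rw [Qmap, dif_pos (Or.inl rfl), eqToHom_comp_apply, eqToHom_self_apply]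
  · apply hom_ext
    intro x
    obtain ⟨m, rfl⟩ := Q_surj (botData S) (i + 1) x
    rw [botInv_apply (by omega)]
    show m = eqToHom htop (Qmap (botData S) (i + 1) m)
    rw [Qmap, dif_pos (Or.inr rfl), eqToHom_comp_apply, eqToHom_self_apply]
  · intro k
    show AddSubgroup.map (LinearMap.toAddMonoidHom (eqToHom h0 : tX (botData S) 0 ⟶ S.X 0).hom)
      (tgr (botData S) 0 k) = S.gr 0 k
    have hQ : tgr (botData S) 0 k = AddSubgroup.map (LinearMap.toAddMonoidHom
        (eqToHom (tX_end (botData S) (Or.inl rfl)).symm : S.X 0 ⟶ tX (botData S) 0).hom)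
        (S.gr 0 k) := by
      show AddSubgroup.map (LinearMap.toAddMonoidHom (Qmap (botData S) 0).hom) _ = _
      rw [Qmap, dif_pos (Or.inl rfl)]
    rw [hQ, map_eqToHom_map, map_eqToHom_self]
  · intro k
    show AddSubgroup.map (LinearMap.toAddMonoidHom
      (eqToHom htop : tX (botData S) (i + 1) ⟶ S.X (i + 1)).hom)
      (tgr (botData S) (i + 1) k) = S.gr (i + 1) k
    have hQ : tgr (botData S) (i + 1) k = AddSubgroup.map (LinearMap.toAddMonoidHom
        (eqToHom (tX_end (botData S) (Or.inr rfl)).symm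
          : S.X (i + 1) ⟶ tX (botData S) (i + 1)).hom)
        (S.gr (i + 1) k) := by
      show AddSubgroup.map (LinearMap.toAddMonoidHom (Qmap (botData S) (i + 1)).hom) _ = _
      rw [Qmap, dif_pos (Or.inr rfl)]
    rw [hQ, map_eqToHom_map, map_eqToHom_self]


section Mono
variable (D D' : TruncData S) (hle : ∀ n, D.C n ≤ D'.C n)

noncomputable def monoMap (n : ℕ) : tX D n ⟶ tX D' n :=
  ModuleCat.ofHom (descend (Qmap D n).hom (Q_surj D n) (Qmap D' n).hom
    (fun m hm => (Q_zero_iff D' n m).mpr (hle n ((Q_zero_iff D n m).mp hm))))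

theorem monoMap_apply (n : ℕ) (m : S.X n) :
    monoMap D D' hle n (Qmap D n m) = Qmap D' n m :=
  descend_apply (Qmap D n).hom (Q_surj D n) (Qmap D' n).hom
    (fun m hm => (Q_zero_iff D' n m).mpr (hle n ((Q_zero_iff D n m).mp hm))) m

include hle in
theorem mor_mono : GradedSeq.Mor (TruncSeq D) (TruncSeq D') := by
  have h0 : tX D 0 = tX D' 0 :=
    (tX_end D (Or.inl rfl)).trans (tX_end D' (Or.inl rfl)).symm
  have htop : tX D (i + 1) = tX D' (i + 1) :=
    (tX_end D (Or.inr rfl)).trans (tX_end D' (Or.inr rfl)).symm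
  refine ⟨h0, htop, monoMap D D' hle, ?_, ?_, ?_, ?_, ?_, ?_⟩
  · intro n
    apply hom_ext
    intro x
    show monoMap D D' hle n (td D n x) = td D' n (monoMap D D' hle (n + 1) x)
    obtain ⟨m, rfl⟩ := Q_surj D (n + 1) x
    by_cases h : n ≤ i
    · rw [td_comm D h, monoMap_apply, monoMap_apply, td_comm D' h]
    · rw [td_zero D h, td_zero D' h]
      show monoMap D D' hle n 0
        = (0 : tX D' (n+1) ⟶ tX D' n).hom (monoMap D D' hle (n + 1) (Qmap D (n+1) m))
      rw [map_zero, ModuleCat.hom_zero, LinearMap.zero_apply]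
  · rintro n k x ⟨m₀, hm₀, rfl⟩
    show monoMap D D' hle n (Qmap D n m₀) ∈ tgr D' n k
    rw [monoMap_apply]
    exact ⟨m₀, hm₀, rfl⟩
  · apply hom_ext
    intro x
    obtain ⟨m, rfl⟩ := Q_surj D 0 x
    rw [monoMap_apply]
    show Qmap D' 0 m = eqToHom h0 (Qmap D 0 m)
    rw [Qmap, dif_pos (Or.inl rfl), Qmap, dif_pos (Or.inl rfl), eqToHom_comp_apply]
  · apply hom_ext
    intro x
    obtain ⟨m, rfl⟩ := Q_surj D (i + 1) x
    rw [monoMap_apply]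
    show Qmap D' (i + 1) m = eqToHom htop (Qmap D (i + 1) m)
    rw [Qmap, dif_pos (Or.inr rfl), Qmap, dif_pos (Or.inr rfl), eqToHom_comp_apply]
  · intro k
    show AddSubgroup.map (LinearMap.toAddMonoidHom (eqToHom h0 : tX D 0 ⟶ tX D' 0).hom)
      (tgr D 0 k) = tgr D' 0 k
    have hQ : tgr D 0 k = AddSubgroup.map (LinearMap.toAddMonoidHom
        (eqToHom (tX_end D (Or.inl rfl)).symm : S.X 0 ⟶ tX D 0).hom) (S.gr 0 k) := by
      show AddSubgroup.map (LinearMap.toAddMonoidHom (Qmap D 0).hom) _ = _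
      rw [Qmap, dif_pos (Or.inl rfl)]
    have hQ' : tgr D' 0 k = AddSubgroup.map (LinearMap.toAddMonoidHom
        (eqToHom (tX_end D' (Or.inl rfl)).symm : S.X 0 ⟶ tX D' 0).hom) (S.gr 0 k) := by
      show AddSubgroup.map (LinearMap.toAddMonoidHom (Qmap D' 0).hom) _ = _
      rw [Qmap, dif_pos (Or.inl rfl)]
    rw [hQ, hQ', map_eqToHom_map]
  · intro k
    show AddSubgroup.map (LinearMap.toAddMonoidHom
      (eqToHom htop : tX D (i + 1) ⟶ tX D' (i + 1)).hom)
      (tgr D (i + 1) k) = tgr D' (i + 1) k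
    have hQ : tgr D (i + 1) k = AddSubgroup.map (LinearMap.toAddMonoidHom
        (eqToHom (tX_end D (Or.inr rfl)).symm : S.X (i + 1) ⟶ tX D (i + 1)).hom)
        (S.gr (i + 1) k) := by
      show AddSubgroup.map (LinearMap.toAddMonoidHom (Qmap D (i + 1)).hom) _ = _
      rw [Qmap, dif_pos (Or.inr rfl)]
    have hQ' : tgr D' (i + 1) k = AddSubgroup.map (LinearMap.toAddMonoidHom
        (eqToHom (tX_end D' (Or.inr rfl)).symm : S.X (i + 1) ⟶ tX D' (i + 1)).hom)
        (S.gr (i + 1) k) := by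
      show AddSubgroup.map (LinearMap.toAddMonoidHom (Qmap D' (i + 1)).hom) _ = _
      rw [Qmap, dif_pos (Or.inr rfl)]
    rw [hQ, hQ', map_eqToHom_map]

end Mono

section Functor
variable {U V : GradedSeq A 𝒜 i}
variable (h0 : U.X 0 = V.X 0) (htop : U.X (i + 1) = V.X (i + 1))
variable (φ : ∀ n : ℕ, U.X n ⟶ V.X n)
variable (DU : TruncData U) (DV : TruncData V)
variable (hCmap : ∀ n (m : U.X n), m ∈ DU.C n → φ n m ∈ DV.C n)

noncomputable def funcMap (n : ℕ) : tX DU n ⟶ tX DV n :=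
  ModuleCat.ofHom (descend (Qmap DU n).hom (Q_surj DU n) (φ n ≫ Qmap DV n).hom
    (fun m hm => by
      show Qmap DV n (φ n m) = 0
      exact (Q_zero_iff DV n _).mpr (hCmap n m ((Q_zero_iff DU n m).mp hm))))

theorem funcMap_apply (n : ℕ) (m : U.X n) :
    funcMap φ DU DV hCmap n (Qmap DU n m) = Qmap DV n (φ n m) :=
  descend_apply (Qmap DU n).hom (Q_surj DU n) (φ n ≫ Qmap DV n).hom
    (fun m hm => (Q_zero_iff DV n _).mpr (hCmap n m ((Q_zero_iff DU n m).mp hm))) m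

include hCmap in
theorem mor_functor
    (hsq : ∀ n : ℕ, U.d n ≫ φ n = φ (n + 1) ≫ V.d n)
    (hφ0 : φ 0 = eqToHom h0) (hφtop : φ (i + 1) = eqToHom htop)
    (hgr0 : ∀ k : ℤ, AddSubgroup.map (LinearMap.toAddMonoidHom
        (eqToHom h0 : U.X 0 ⟶ V.X 0).hom) (U.gr 0 k) = V.gr 0 k)
    (hgrtop : ∀ k : ℤ, AddSubgroup.map (LinearMap.toAddMonoidHom
        (eqToHom htop : U.X (i + 1) ⟶ V.X (i + 1)).hom) (U.gr (i + 1) k) = V.gr (i + 1) k)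
    (hgr : ∀ (n : ℕ) (k : ℤ) (m : U.X n), m ∈ U.gr n k → φ n m ∈ V.gr n k) :
    GradedSeq.Mor (TruncSeq DU) (TruncSeq DV) := by
  have H0 : tX DU 0 = tX DV 0 :=
    (tX_end DU (Or.inl rfl)).trans (h0.trans (tX_end DV (Or.inl rfl)).symm)
  have Htop : tX DU (i + 1) = tX DV (i + 1) :=
    (tX_end DU (Or.inr rfl)).trans (htop.trans (tX_end DV (Or.inr rfl)).symm)
  refine ⟨H0, Htop, funcMap φ DU DV hCmap, ?_, ?_, ?_, ?_, ?_, ?_⟩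
  · intro n
    apply hom_ext
    intro x
    show funcMap φ DU DV hCmap n (td DU n x)
      = td DV n (funcMap φ DU DV hCmap (n + 1) x)
    obtain ⟨m, rfl⟩ := Q_surj DU (n + 1) x
    by_cases h : n ≤ i
    · rw [td_comm DU h, funcMap_apply, funcMap_apply, td_comm DV h]
      have : V.d n (φ (n + 1) m) = φ n (U.d n m) := by
        have := congrArg (fun f => f m) (hsq n)
        exact this.symm
      rw [this]
    · rw [td_zero DU h, td_zero DV h]
      show funcMap φ DU DV hCmap n 0
        = (0 : tX DV (n+1) ⟶ tX DV n).hom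
          (funcMap φ DU DV hCmap (n + 1) (Qmap DU (n+1) m))
      rw [map_zero, ModuleCat.hom_zero, LinearMap.zero_apply]
  · rintro n k x ⟨m₀, hm₀, rfl⟩
    show funcMap φ DU DV hCmap n (Qmap DU n m₀) ∈ tgr DV n k
    rw [funcMap_apply]
    exact ⟨φ n m₀, hgr n k m₀ hm₀, rfl⟩
  · apply hom_ext
    intro x
    obtain ⟨m, rfl⟩ := Q_surj DU 0 x
    rw [funcMap_apply, hφ0]
    show Qmap DV 0 (eqToHom h0 m) = eqToHom H0 (Qmap DU 0 m)
    rw [Qmap, dif_pos (Or.inl rfl), Qmap, dif_pos (Or.inl rfl),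
      eqToHom_comp_apply, eqToHom_comp_apply]
  · apply hom_ext
    intro x
    obtain ⟨m, rfl⟩ := Q_surj DU (i + 1) x
    rw [funcMap_apply, hφtop]
    show Qmap DV (i + 1) (eqToHom htop m) = eqToHom Htop (Qmap DU (i + 1) m)
    rw [Qmap, dif_pos (Or.inr rfl), Qmap, dif_pos (Or.inr rfl),
      eqToHom_comp_apply, eqToHom_comp_apply]
  · intro k
    show AddSubgroup.map (LinearMap.toAddMonoidHom (eqToHom H0 : tX DU 0 ⟶ tX DV 0).hom)
      (tgr DU 0 k) = tgr DV 0 k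
    have hQ : tgr DU 0 k = AddSubgroup.map (LinearMap.toAddMonoidHom
        (eqToHom (tX_end DU (Or.inl rfl)).symm : U.X 0 ⟶ tX DU 0).hom) (U.gr 0 k) := by
      show AddSubgroup.map (LinearMap.toAddMonoidHom (Qmap DU 0).hom) _ = _
      rw [Qmap, dif_pos (Or.inl rfl)]
    have hQ' : tgr DV 0 k = AddSubgroup.map (LinearMap.toAddMonoidHom
        (eqToHom (tX_end DV (Or.inl rfl)).symm : V.X 0 ⟶ tX DV 0).hom) (V.gr 0 k) := by
      show AddSubgroup.map (LinearMap.toAddMonoidHom (Qmap DV 0).hom) _ = _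
      rw [Qmap, dif_pos (Or.inl rfl)]
    rw [hQ, hQ', map_eqToHom_map,
      show ((tX_end DU (Or.inl rfl)).symm.trans H0)
        = (h0.trans (tX_end DV (Or.inl rfl)).symm) from rfl,
      ← map_eqToHom_map, hgr0 k]
    exact h0
  · intro k
    show AddSubgroup.map (LinearMap.toAddMonoidHom
      (eqToHom Htop : tX DU (i + 1) ⟶ tX DV (i + 1)).hom)
      (tgr DU (i + 1) k) = tgr DV (i + 1) k
    have hQ : tgr DU (i + 1) k = AddSubgroup.map (LinearMap.toAddMonoidHom
        (eqToHom (tX_end DU (Or.inr rfl)).symm : U.X (i + 1) ⟶ tX DU (i + 1)).hom)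
        (U.gr (i + 1) k) := by
      show AddSubgroup.map (LinearMap.toAddMonoidHom (Qmap DU (i + 1)).hom) _ = _
      rw [Qmap, dif_pos (Or.inr rfl)]
    have hQ' : tgr DV (i + 1) k = AddSubgroup.map (LinearMap.toAddMonoidHom
        (eqToHom (tX_end DV (Or.inr rfl)).symm : V.X (i + 1) ⟶ tX DV (i + 1)).hom)
        (V.gr (i + 1) k) := by
      show AddSubgroup.map (LinearMap.toAddMonoidHom (Qmap DV (i + 1)).hom) _ = _
      rw [Qmap, dif_pos (Or.inr rfl)]
    rw [hQ, hQ', map_eqToHom_map,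
      show ((tX_end DU (Or.inr rfl)).symm.trans Htop)
        = (htop.trans (tX_end DV (Or.inr rfl)).symm) from rfl,
      ← map_eqToHom_map, hgrtop k]
    exact htop

end Functor


end Morphisms

section High
variable {A : Type} [Ring A] [Algebra ℂ A] {𝒜 : ℤ → Submodule ℂ A} [GradedAlgebra 𝒜]
variable {i : ℕ}
variable (hnonneg : ∀ n : ℤ, n < 0 → 𝒜 n = ⊥)

/-- the submodule of components in degrees `> N` -/
def highSupp (S : GradedSeq A 𝒜 i) (n : ℕ) (N : ℤ) : Submodule A (S.X n) :=
  suppSubmodule 𝒜 (S.gr n) (S.internal n)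
    (fun j k a m hj hm => S.compat n j k a m hj hm) hnonneg
    (fun k => k ≤ N) (fun j l hj hjl => by omega)

theorem mem_highSupp {S : GradedSeq A 𝒜 i} {n : ℕ} {N : ℤ} {m : S.X n} :
    m ∈ highSupp hnonneg S n N ↔
      ∀ k, k ≤ N → grpi (S.gr n) (S.internal n) k m = 0 := Iff.rfl

def highC (S : GradedSeq A 𝒜 i) (N : ℤ) (n : ℕ) : Submodule A (S.X n) :=
  if n = 0 ∨ n = i + 1 then ⊥ else if n ≤ i then highSupp hnonneg S n N else ⊤

theorem highC_end {S : GradedSeq A 𝒜 i} {N : ℤ} {n : ℕ} (h : n = 0 ∨ n = i + 1) :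
    highC hnonneg S N n = ⊥ := if_pos h

theorem highC_mid {S : GradedSeq A 𝒜 i} {N : ℤ} {n : ℕ} (h1 : 1 ≤ n) (h2 : n ≤ i) :
    highC hnonneg S N n = highSupp hnonneg S n N := by
  rw [highC, if_neg (by omega), if_pos h2]

theorem highC_big {S : GradedSeq A 𝒜 i} {N : ℤ} {n : ℕ} (h : i + 2 ≤ n) :
    highC hnonneg S N n = ⊤ := by
  rw [highC, if_neg (by omega), if_neg (by omega)]

/-- components commute with the differentials -/
theorem d_pi_comm (S : GradedSeq A 𝒜 i) (n : ℕ) (k : ℤ) (m : S.X (n + 1)) :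
    grpi (S.gr n) (S.internal n) k (S.d n m)
      = S.d n (grpi (S.gr (n + 1)) (S.internal (n + 1)) k m) :=
  grpi_comm (S.gr (n + 1)) (S.internal (n + 1)) (S.gr n) (S.internal n)
    (LinearMap.toAddMonoidHom (S.d n).hom) (fun k' m' hm' => S.dgr n k' m' hm') k m

/-- the truncation data killing all degrees above `N` -/
def highData (S : GradedSeq A 𝒜 i) (hi : 1 ≤ i) (N : ℤ)
    (hN0 : ∀ k, N < k → ∀ m ∈ S.gr 0 k, m = 0)
    (hNtop : ∀ k, N < k → ∀ m ∈ S.gr (i + 1) k, m = 0) : TruncData S where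
  C := highC hnonneg S N
  hC0 := highC_end hnonneg (Or.inl rfl)
  hCtop := highC_end hnonneg (Or.inr rfl)
  hCbig n hn := highC_big hnonneg hn
  hCgr := by
    intro n k m hm
    by_cases h : n = 0 ∨ n = i + 1
    · rw [highC_end hnonneg h] at *
      rw [(Submodule.mem_bot A).mp hm, map_zero]
      trivial
    · by_cases h2 : n ≤ i
      · rw [highC_mid hnonneg (by omega) h2] at *
        exact grpi_mem_suppSubmodule 𝒜 (S.gr n) (S.internal n) _ hnonneg hm k
      · rw [highC_big hnonneg (by omega)]
        trivial
  hd := by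
    intro n hn m hm
    by_cases htop' : n = i
    · subst htop'
      rw [highC_end hnonneg (Or.inr rfl)] at hm
      rw [(Submodule.mem_bot A).mp hm, map_zero]
      exact zero_mem _
    · have hmid : n + 1 ≤ i := by omega
      rw [highC_mid hnonneg (by omega) hmid] at hm
      have hdm : ∀ k, k ≤ N → grpi (S.gr n) (S.internal n) k (S.d n m) = 0 := by
        intro k hk
        rw [d_pi_comm, hm k hk, map_zero]
      by_cases hz : n = 0
      · subst hz
        rw [highC_end hnonneg (Or.inl rfl)]
        have : S.d 0 m = 0 := by
          obtain ⟨s, h0', hsum⟩ := grpi_exists_support (S.gr 0) (S.internal 0) (S.d 0 m)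
          rw [← hsum]
          refine Finset.sum_eq_zero (fun k _ => ?_)
          by_cases hk : k ≤ N
          · exact hdm k hk
          · exact hN0 k (by omega) _ (grpi_mem (S.gr 0) (S.internal 0) k (S.d 0 m))
        rw [this]; trivial
      · rw [highC_mid hnonneg (by omega) (by omega)]
        exact hdm
  hinj := by
    intro m hm
    rw [highC_mid hnonneg hi le_rfl] at hm
    obtain ⟨s, h0', hsum⟩ := grpi_exists_support (S.gr (i + 1)) (S.internal (i + 1)) m
    rw [← hsum]
    refine Finset.sum_eq_zero (fun k _ => ?_)
    by_cases hk : k ≤ N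
    · apply S.inj
      rw [← d_pi_comm, hm k hk, map_zero]
    · exact hNtop k (by omega) _ (grpi_mem (S.gr (i + 1)) (S.internal (i + 1)) k m)
  hexact := by
    intro n hn y hy
    by_cases hz : n = 0
    · subst hz
      rw [highC_end hnonneg (Or.inl rfl)] at hy
      exact Submodule.mem_sup_left ((S.exact 0 hn y).mp ((Submodule.mem_bot A).mp hy))
    · rw [highC_mid hnonneg (by omega) (by omega)] at hy
      obtain ⟨s, h0', hsum⟩ := grpi_exists_support (S.gr (n + 1)) (S.internal (n + 1)) y
      classical
      set y' := ∑ k ∈ s.filter (· ≤ N), grpi (S.gr (n + 1)) (S.internal (n + 1)) k y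
        with hy'
      have hdy' : S.d n y' = 0 := by
        rw [hy', map_sum]
        refine Finset.sum_eq_zero (fun k hk => ?_)
        rw [← d_pi_comm, hy k (Finset.mem_filter.mp hk).2]
      obtain ⟨z, hz'⟩ := (S.exact n hn y').mp hdy'
      have hdiff : y - y' ∈ highC hnonneg S N (n + 1) := by
        rw [highC_mid hnonneg (by omega) (by omega)]
        intro k hk
        rw [map_sub]
        have hp : grpi (S.gr (n + 1)) (S.internal (n + 1)) k y'
            = if k ∈ s.filter (· ≤ N) then grpi (S.gr (n + 1)) (S.internal (n + 1)) k y
              else 0 := by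
          rw [hy']
          exact grpi_sum_piece (S.gr (n + 1)) (S.internal (n + 1)) _ _
            (fun l _ => grpi_mem (S.gr (n + 1)) (S.internal (n + 1)) l y) k
        rw [hp]
        by_cases hks : k ∈ s
        · rw [if_pos (show k ∈ s.filter (fun x => x ≤ N) from
            Finset.mem_filter.mpr ⟨hks, hk⟩), sub_self]
        · rw [if_neg (fun hc => hks (Finset.mem_filter.mp hc).1), h0' k hks, sub_zero]
      have : y = y' + (y - y') := by abel
      rw [this]
      exact Submodule.add_mem_sup (LinearMap.mem_range.mpr ⟨z, hz'⟩) hdiff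

end High


section FD
variable {A : Type} [Ring A] [Algebra ℂ A] {𝒜 : ℤ → Submodule ℂ A} [GradedAlgebra 𝒜]
variable {i : ℕ}
variable [IsNoetherianRing A]

/-- an `A`-linear map as a ℂ-linear map of restricted scalars -/
def rsMap {X Y : Type} [AddCommGroup X] [Module A X] [AddCommGroup Y] [Module A Y]
    (f : X →ₗ[A] Y) : RestrictScalars ℂ A X →ₗ[ℂ] RestrictScalars ℂ A Y where
  toFun x := f x
  map_add' := f.map_add
  map_smul' c x := by
    show f ((algebraMap ℂ A c) • x) = (algebraMap ℂ A c) • (f x)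
    exact f.map_smul _ _

theorem fd_quotient {X : Type} [AddCommGroup X] [Module A X] (C : Submodule A X)
    (h : FiniteDimensional ℂ (RestrictScalars ℂ A X)) :
    FiniteDimensional ℂ (RestrictScalars ℂ A (X ⧸ C)) := by
  haveI := h
  exact Module.Finite.of_surjective (rsMap C.mkQ)
    (fun y => Submodule.mkQ_surjective C y)

theorem fd_subsingleton (V : Type) [AddCommGroup V] [Module ℂ V] [Subsingleton V] :
    Module.Finite ℂ V :=
  Module.Finite.of_surjective (0 : ℂ →ₗ[ℂ] V) (fun v => ⟨0, Subsingleton.elim _ _⟩)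

theorem isFD_bot {S : GradedSeq A 𝒜 i} (hS : S.IsFD) :
    (TruncSeq (botData S)).IsFD := by
  intro n
  show FiniteDimensional ℂ (RestrictScalars ℂ A (tX (botData S) n))
  by_cases h : n = 0 ∨ n = i + 1
  · rw [tX_end (botData S) h]
    exact hS n
  · rw [tX_mid (botData S) h]
    exact fd_quotient _ (hS n)

variable (hnonneg : ∀ n : ℤ, n < 0 → 𝒜 n = ⊥) (hfd0 : FiniteDimensional ℂ (𝒜 0))

include hnonneg hfd0 in
theorem isFD_high {S : GradedSeq A 𝒜 i} (hi : 1 ≤ i) (N : ℤ)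
    (hN0 : ∀ k, N < k → ∀ m ∈ S.gr 0 k, m = 0)
    (hNtop : ∀ k, N < k → ∀ m ∈ S.gr (i + 1) k, m = 0)
    (hend0 : FiniteDimensional ℂ (RestrictScalars ℂ A (S.X 0)))
    (hendtop : FiniteDimensional ℂ (RestrictScalars ℂ A (S.X (i + 1)))) :
    (TruncSeq (highData hnonneg S hi N hN0 hNtop)).IsFD := by
  set D := highData hnonneg S hi N hN0 hNtop with hD
  intro n
  show FiniteDimensional ℂ (RestrictScalars ℂ A (tX D n))
  by_cases h : n = 0 ∨ n = i + 1
  · rw [tX_end D h]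
    rcases h with h | h
    · rw [h]; exact hend0
    · rw [h]; exact hendtop
  · by_cases h2 : n ≤ i
    · -- middle truncated piece: graded with fd pieces and bounded grading
      have hcompatS : ∀ (j k : ℤ) (a : A) (m : RestrictScalars ℂ A (S.X n)),
          a ∈ 𝒜 j → m ∈ S.gr n k → a • m ∈ S.gr n (j + k) :=
        fun j k a m hj hm => S.compat n j k a m hj hm
      have hcompatT : ∀ (j k : ℤ) (a : A) (m : RestrictScalars ℂ A (tX D n)),
          a ∈ 𝒜 j → m ∈ tgr D n k → a • m ∈ tgr D n (j + k) :=
        fun j k a m hj hm =>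
          quotGr_compat 𝒜 (S.gr n) (Qmap D n).hom
            (fun j' k' a' m' => S.compat n j' k' a' m') j k a m hj hm
      have hSfd : ∀ k, FiniteDimensional ℂ
          (grC (M := RestrictScalars ℂ A (S.X n)) 𝒜 (S.gr n) hcompatS k) :=
        grC_fd_of_fg (M := RestrictScalars ℂ A (S.X n)) 𝒜 (S.gr n) (S.internal n)
          hcompatS hnonneg hfd0 (S.fg n)
      have hmapeq : ∀ k, grC (M := RestrictScalars ℂ A (tX D n)) 𝒜 (tgr D n) hcompatT k
          = Submodule.map (rsMap (Qmap D n).hom)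
            (grC (M := RestrictScalars ℂ A (S.X n)) 𝒜 (S.gr n) hcompatS k) := by
        intro k
        apply le_antisymm
        · rintro x ⟨m₀, hm₀, rfl⟩
          exact ⟨m₀, hm₀, rfl⟩
        · rintro x ⟨m₀, hm₀, rfl⟩
          exact ⟨m₀, hm₀, rfl⟩
      have hTfd : ∀ k, FiniteDimensional ℂ
          (grC (M := RestrictScalars ℂ A (tX D n)) 𝒜 (tgr D n) hcompatT k) := by
        intro k
        rw [hmapeq k]
        haveI := hSfd k
        infer_instance
      obtain ⟨b, hb⟩ := exists_lower_bound (M := RestrictScalars ℂ A (S.X n)) 𝒜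
        (S.gr n) (S.internal n) hcompatS hnonneg (S.fg n)
      have hbT : ∀ k, k < b → ∀ m ∈ tgr D n k, m = (0 : RestrictScalars ℂ A (tX D n)) := by
        rintro k hk m ⟨m₀, hm₀, rfl⟩
        rw [hb k hk m₀ hm₀]
        exact map_zero _
      have hNT : ∀ k, N < k → ∀ m ∈ tgr D n k,
          m = (0 : RestrictScalars ℂ A (tX D n)) := by
        rintro k hk m ⟨m₀, hm₀, rfl⟩
        show Qmap D n m₀ = 0
        rw [Q_zero_iff]
        show m₀ ∈ highC hnonneg S N n
        rw [highC_mid hnonneg (by omega) h2]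
        exact mem_suppSubmodule_of_homog 𝒜 (S.gr n) (S.internal n) _ hnonneg hm₀
          (by omega)
      exact fd_of_bounds (M := RestrictScalars ℂ A (tX D n)) 𝒜 (tgr D n)
        (tgr_internal D n) hcompatT hTfd b N hbT hNT
    · -- junk: quotient by ⊤ is subsingleton
      rw [tX_mid D h]
      haveI hsub : Subsingleton ((S.X n) ⧸ D.C n) := by
        rw [show D.C n = ⊤ from highC_big hnonneg (by omega)]
        exact Submodule.Quotient.subsingleton_iff.mpr rfl
      haveI : Subsingleton (RestrictScalars ℂ A ↑(ModuleCat.of A ((S.X n) ⧸ D.C n))) := hsub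
      exact fd_subsingleton _

include hnonneg in
theorem exists_EB {S : GradedSeq A 𝒜 i}
    (hend0 : FiniteDimensional ℂ (RestrictScalars ℂ A (S.X 0)))
    (hendtop : FiniteDimensional ℂ (RestrictScalars ℂ A (S.X (i + 1)))) :
    ∃ N : ℤ, (∀ k, N < k → ∀ m ∈ S.gr 0 k, m = 0) ∧
      (∀ k, N < k → ∀ m ∈ S.gr (i + 1) k, m = 0) := by
  have hcompat0 : ∀ (j k : ℤ) (a : A) (m : RestrictScalars ℂ A (S.X 0)),
      a ∈ 𝒜 j → m ∈ S.gr 0 k → a • m ∈ S.gr 0 (j + k) :=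
    fun j k a m hj hm => S.compat 0 j k a m hj hm
  have hcompatT : ∀ (j k : ℤ) (a : A) (m : RestrictScalars ℂ A (S.X (i + 1))),
      a ∈ 𝒜 j → m ∈ S.gr (i + 1) k → a • m ∈ S.gr (i + 1) (j + k) :=
    fun j k a m hj hm => S.compat (i + 1) j k a m hj hm
  haveI := hend0
  haveI := hendtop
  obtain ⟨N₀, hN₀⟩ := exists_upper_bound_of_fd (M := RestrictScalars ℂ A (S.X 0)) 𝒜
    (S.gr 0) (S.internal 0) hcompat0
  obtain ⟨N₁, hN₁⟩ := exists_upper_bound_of_fd (M := RestrictScalars ℂ A (S.X (i + 1)))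
    𝒜 (S.gr (i + 1)) (S.internal (i + 1)) hcompatT
  exact ⟨max N₀ N₁, fun k hk => hN₀ k (by omega), fun k hk => hN₁ k (by omega)⟩

end FD

section Main
variable {A : Type} [Ring A] [Algebra ℂ A] {𝒜 : ℤ → Submodule ℂ A} [GradedAlgebra 𝒜]
variable {i : ℕ}

/-- ends are finite-dimensional and their gradings are bounded by `N` -/
def Good (N : ℤ) (U : GradedSeq A 𝒜 i) : Prop :=
  FiniteDimensional ℂ (RestrictScalars ℂ A (U.X 0)) ∧
  FiniteDimensional ℂ (RestrictScalars ℂ A (U.X (i + 1))) ∧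
  (∀ k, N < k → ∀ m ∈ U.gr 0 k, m = 0) ∧
  (∀ k, N < k → ∀ m ∈ U.gr (i + 1) k, m = 0)

theorem good_transfer (N : ℤ) {U V : GradedSeq A 𝒜 i} (h : GradedSeq.Mor U V) :
    Good N U ↔ Good N V := by
  obtain ⟨h0, htop, φ, hsq, hgr, hφ0, hφtop, hgr0, hgrtop⟩ := h
  constructor
  · rintro ⟨f0, ftop, b0, btop⟩
    refine ⟨by
        haveI := f0
        exact Module.Finite.of_surjective
          (rsMap (eqToHom h0 : U.X 0 ⟶ V.X 0).hom) (eqToHom_bij h0).2, by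
        haveI := ftop
        exact Module.Finite.of_surjective
          (rsMap (eqToHom htop : U.X (i + 1) ⟶ V.X (i + 1)).hom) (eqToHom_bij htop).2,
      ?_, ?_⟩
    · intro k hk m hm
      rw [← hgr0 k] at hm
      obtain ⟨m₀, hm₀, rfl⟩ := hm
      rw [b0 k hk m₀ hm₀]
      exact map_zero _
    · intro k hk m hm
      rw [← hgrtop k] at hm
      obtain ⟨m₀, hm₀, rfl⟩ := hm
      rw [btop k hk m₀ hm₀]
      exact map_zero _
  · rintro ⟨f0, ftop, b0, btop⟩
    refine ⟨by
        haveI := f0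
        exact Module.Finite.of_surjective
          (rsMap (eqToHom h0.symm : V.X 0 ⟶ U.X 0).hom) (eqToHom_bij h0.symm).2, by
        haveI := ftop
        exact Module.Finite.of_surjective
          (rsMap (eqToHom htop.symm : V.X (i + 1) ⟶ U.X (i + 1)).hom)
          (eqToHom_bij htop.symm).2,
      ?_, ?_⟩
    · intro k hk m hm
      have h1 : (LinearMap.toAddMonoidHom (eqToHom h0 : U.X 0 ⟶ V.X 0).hom) m ∈ V.gr 0 k := by
        rw [← hgr0 k]
        exact ⟨m, hm, rfl⟩
      have h2 := b0 k hk _ h1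
      exact (eqToHom_bij h0).1
        (by rw [show (eqToHom h0 : U.X 0 ⟶ V.X 0) m
            = (LinearMap.toAddMonoidHom (eqToHom h0 : U.X 0 ⟶ V.X 0).hom) m from rfl,
          h2, map_zero])
    · intro k hk m hm
      have h1 : (LinearMap.toAddMonoidHom
          (eqToHom htop : U.X (i + 1) ⟶ V.X (i + 1)).hom) m ∈ V.gr (i + 1) k := by
        rw [← hgrtop k]
        exact ⟨m, hm, rfl⟩
      have h2 := btop k hk _ h1
      exact (eqToHom_bij htop).1
        (by rw [show (eqToHom htop : U.X (i + 1) ⟶ V.X (i + 1)) m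
            = (LinearMap.toAddMonoidHom
              (eqToHom htop : U.X (i + 1) ⟶ V.X (i + 1)).hom) m from rfl,
          h2, map_zero])

end Main

/-- Lemma 2.1 of the paper: the natural functor
`D^b(R-gmod_fd) → D^b(R-gmod)` is fully faithful.  By the standard dévissage
[BBD, Prop. 3.1.16] this amounts to the statement that for finite-dimensional graded
modules `A*` and `B`, the natural map of Yoneda Ext groups
`Ext^i_{R-gmod_fd}(A*,B) → Ext^i_{R-gmod}(A*,B)` is bijective for all `i ≥ 1`:
every extension class of `A*` by `B` contains a finite-dimensional representative, and
two finite-dimensional extensions equivalent in `R-gmod` are already equivalent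
in `R-gmod_fd`. -/
theorem derived_fd_to_gmod_fullyFaithful
    (A : Type) [Ring A] [Algebra ℂ A] [IsNoetherianRing A]
    (𝒜 : ℤ → Submodule ℂ A) [GradedAlgebra 𝒜]
    (hnonneg : ∀ n : ℤ, n < 0 → 𝒜 n = ⊥)
    (hfd0 : FiniteDimensional ℂ (𝒜 0))
    (i : ℕ) (hi : 1 ≤ i) :
    -- surjectivity of Ext^i_fd(A*,B) → Ext^i(A*,B)
    (∀ S : GradedSeq A 𝒜 i,
      @FiniteDimensional ℂ (RestrictScalars ℂ A (S.X 0)) _ _ (RestrictScalars.module ℂ A (S.X 0)) →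
      @FiniteDimensional ℂ (RestrictScalars ℂ A (S.X (i + 1))) _ _
        (RestrictScalars.module ℂ A (S.X (i + 1))) →
      ∃ T : GradedSeq A 𝒜 i, T.IsFD ∧ Relation.EqvGen GradedSeq.Mor S T) ∧
    -- injectivity: equivalence in R-gmod implies equivalence within R-gmod_fd
    (∀ S T : GradedSeq A 𝒜 i, S.IsFD → T.IsFD →
      Relation.EqvGen GradedSeq.Mor S T →
      Relation.EqvGen (fun S' T' : GradedSeq A 𝒜 i =>
        GradedSeq.Mor S' T' ∧ S'.IsFD ∧ T'.IsFD) S T) := by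
  constructor
  · intro S hfdS0 hfdStop
    obtain ⟨N, hN0, hNtop⟩ := exists_EB hnonneg (S := S) hfdS0 hfdStop
    refine ⟨TruncSeq (highData hnonneg S hi N hN0 hNtop),
      isFD_high hnonneg hfd0 hi N hN0 hNtop hfdS0 hfdStop, ?_⟩
    have hle : ∀ n, (botData S).C n ≤ (highData hnonneg S hi N hN0 hNtop).C n := by
      intro n
      by_cases h : n ≤ i + 1
      · rw [bot_C_eq_bot h]
        exact bot_le
      · rw [show (highData hnonneg S hi N hN0 hNtop).C n = ⊤ from
          highC_big hnonneg (by omega)]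
        exact le_top
    exact Relation.EqvGen.trans _ _ _
      (Relation.EqvGen.symm _ _ (Relation.EqvGen.rel _ _ (mor_bot (S := S))))
      (Relation.EqvGen.rel _ _ (mor_mono (botData S) _ hle))
  · intro S T hS hT h
    obtain ⟨N, hNS0, hNStop⟩ := exists_EB hnonneg (S := S) (hS 0) (hS (i + 1))
    set R' := fun S' T' : GradedSeq A 𝒜 i =>
      GradedSeq.Mor S' T' ∧ S'.IsFD ∧ T'.IsFD with hR'
    have hlegen : ∀ (U : GradedSeq A 𝒜 i) (DU' : TruncData U) (hDU' : DU'.C = highC hnonneg U N),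
        ∀ n, (botData U).C n ≤ DU'.C n := by
      intro U DU' hDU' n
      by_cases h : n ≤ i + 1
      · rw [bot_C_eq_bot h]
        exact bot_le
      · rw [hDU', show highC hnonneg U N n = ⊤ from highC_big hnonneg (by omega)]
        exact le_top
    have main : ∀ U V : GradedSeq A 𝒜 i, Relation.EqvGen GradedSeq.Mor U V →
        (Good N U ↔ Good N V) ∧
        ∀ (hU : Good N U) (hV : Good N V),
          Relation.EqvGen R'
            (TruncSeq (highData hnonneg U hi N hU.2.2.1 hU.2.2.2))
            (TruncSeq (highData hnonneg V hi N hV.2.2.1 hV.2.2.2)) := by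
      intro U V h
      induction h with
      | rel U V huv =>
        refine ⟨good_transfer N huv, fun hU hV => ?_⟩
        apply Relation.EqvGen.rel
        obtain ⟨h0, htop, φ, hsq, hgr, hφ0, hφtop, hgr0, hgrtop⟩ := huv
        refine ⟨?_, isFD_high hnonneg hfd0 hi N _ _ hU.1 hU.2.1,
          isFD_high hnonneg hfd0 hi N _ _ hV.1 hV.2.1⟩
        have hCmap : ∀ n (m : U.X n), m ∈ (highData hnonneg U hi N hU.2.2.1 hU.2.2.2).C n →
            φ n m ∈ (highData hnonneg V hi N hV.2.2.1 hV.2.2.2).C n := by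
          intro n m hm
          show φ n m ∈ highC hnonneg V N n
          have hm' : m ∈ highC hnonneg U N n := hm
          by_cases he : n = 0 ∨ n = i + 1
          · rw [highC_end hnonneg he] at *
            rw [(Submodule.mem_bot A).mp hm', map_zero]
            trivial
          · by_cases h2 : n ≤ i
            · rw [highC_mid hnonneg (by omega) h2] at *
              intro k hk
              have hc := grpi_comm (U.gr n) (U.internal n) (V.gr n) (V.internal n)
                (LinearMap.toAddMonoidHom (φ n).hom) (fun k' m' hm'' => hgr n k' m' hm'') k m
              show grpi (V.gr n) (V.internal n) k
                ((LinearMap.toAddMonoidHom (φ n).hom) m) = 0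
              rw [hc, hm' k hk, map_zero]
            · rw [highC_big hnonneg (by omega)]
              trivial
        exact mor_functor h0 htop φ _ _ hCmap hsq hφ0 hφtop hgr0 hgrtop hgr
      | refl U => exact ⟨Iff.rfl, fun hU hV => Relation.EqvGen.refl _⟩
      | symm x y hxy ih => exact ⟨ih.1.symm, fun hU hV => Relation.EqvGen.symm _ _ (ih.2 hV hU)⟩
      | trans x y z hxy hyz ih1 ih2 =>
        refine ⟨ih1.1.trans ih2.1, fun hU hV => ?_⟩
        have hy := ih1.1.mp hU
        exact Relation.EqvGen.trans _ _ _ (ih1.2 hU hy) (ih2.2 hy hV)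
    have hGoodS : Good N S := ⟨hS 0, hS (i + 1), hNS0, hNStop⟩
    have hGoodT : Good N T := (main S T h).1.mp hGoodS
    have chain : ∀ (U : GradedSeq A 𝒜 i) (hUfd : U.IsFD) (hU : Good N U),
        Relation.EqvGen R' U
          (TruncSeq (highData hnonneg U hi N hU.2.2.1 hU.2.2.2)) := by
      intro U hUfd hU
      refine Relation.EqvGen.trans _ _ _
        (Relation.EqvGen.symm _ _ (Relation.EqvGen.rel _ _
          ⟨mor_bot (S := U), isFD_bot hUfd, hUfd⟩))
        (Relation.EqvGen.rel _ _ ⟨mor_mono (botData U) _ (hlegen U _ rfl),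
          isFD_bot hUfd, isFD_high hnonneg hfd0 hi N _ _ hU.1 hU.2.1⟩)
    exact Relation.EqvGen.trans _ _ _ (chain S hS hGoodS)
      (Relation.EqvGen.trans _ _ _ ((main S T h).2 hGoodS hGoodT)
        (Relation.EqvGen.symm _ _ (chain T hT hGoodT)))
end

section
/- Let (𝒜, ℬ) be an admissible pair in a triangulated category 𝒟, i.e., Hom(A,B) = 0 for all A ∈ 𝒜, B ∈ ℬ, and 𝒜 together with ℬ generate 𝒟 as a triangulated category. Then the inclusion 𝒜 → 𝒟 admits a right adjoint ι and the inclusion ℬ → 𝒟 admits a left adjoint ȷ, and for every X ∈ 𝒟 there is a distinguished triangle ι(X) → X → ȷ(X) →. -/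
open CategoryTheory CategoryTheory.Triangulated CategoryTheory.Pretriangulated
  CategoryTheory.Limits CategoryTheory.Category

open ZeroObject

namespace CategoryTheory.Triangulated

/-- The structure `Triangulated.Subcategory` of the older Mathlib (removed since), restated. -/
structure Subcategory (C : Type*) [Category C] [HasZeroObject C] [HasShift C ℤ]
    [Preadditive C] [∀ (n : ℤ), (shiftFunctor C n).Additive] [Pretriangulated C] where
  P : C → Prop
  zero' : ∃ (Z : C) (_ : IsZero Z), P Z
  shift (X : C) (n : ℤ) : P X → P (X⟦n⟧)
  ext₂' (T : Triangle C) (_ : T ∈ distTriang C) : P T.obj₁ → P T.obj₃ →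
    ObjectProperty.isoClosure P T.obj₂

end CategoryTheory.Triangulated

namespace CategoryTheory.Triangulated.Subcategory

variable {C : Type*} [Category C] [HasZeroObject C] [HasShift C ℤ]
    [Preadditive C] [∀ (n : ℤ), (shiftFunctor C n).Additive] [Pretriangulated C]

lemma zero (S : Subcategory C) [ObjectProperty.IsClosedUnderIsomorphisms S.P] : S.P 0 := by
  obtain ⟨Z, hZ, hP⟩ := S.zero'
  exact ObjectProperty.prop_of_iso _ hZ.isoZero hP

lemma ext₂ (S : Subcategory C) [ObjectProperty.IsClosedUnderIsomorphisms S.P] (T : Triangle C)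
    (hT : T ∈ distTriang C) (h₁ : S.P T.obj₁) (h₃ : S.P T.obj₃) : S.P T.obj₂ := by
  obtain ⟨Y, hY, ⟨e⟩⟩ := S.ext₂' T hT h₁ h₃
  exact ObjectProperty.prop_of_iso _ e.symm hY

/-- Alternative constructor. -/
def mk' (P : C → Prop) (zero : P 0) (shift : ∀ (X : C) (n : ℤ), P X → P (X⟦n⟧))
    (ext₂ : ∀ (T : Triangle C) (_ : T ∈ distTriang C), P T.obj₁ → P T.obj₃ → P T.obj₂) :
    Subcategory C where
  P := P
  zero' := ⟨0, isZero_zero _, zero⟩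
  shift := shift
  ext₂' T hT h₁ h₃ := ObjectProperty.le_isoClosure P _ (ext₂ T hT h₁ h₃)

instance mk'_closed (P : C → Prop) (zero : P 0) (shift : ∀ (X : C) (n : ℤ), P X → P (X⟦n⟧))
    (ext₂ : ∀ (T : Triangle C) (_ : T ∈ distTriang C), P T.obj₁ → P T.obj₃ → P T.obj₂) :
    ObjectProperty.IsClosedUnderIsomorphisms (mk' P zero shift ext₂).P where
  of_iso {X Y} e hX := by
    refine ext₂ (Triangle.mk e.hom (0 : Y ⟶ 0) 0) ?_ hX zero
    exact isomorphic_distinguished _ (contractible_distinguished X) _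
      (Triangle.isoMk _ _ (Iso.refl _) e.symm (Iso.refl _) (e.hom_inv_id.trans (Category.id_comp _).symm)
        (by dsimp; exact (Category.comp_id _).trans comp_zero.symm)
        (zero_comp.trans comp_zero.symm))

end CategoryTheory.Triangulated.Subcategory

namespace AdmissiblePairAux

variable {D : Type*} [Category D] [HasZeroObject D] [Preadditive D] [HasShift D ℤ]
  [∀ n : ℤ, (shiftFunctor D n).Additive] [Pretriangulated D]

variable (A B : Triangulated.Subcategory D)

/-- The property that `X` admits a semiorthogonal decomposition triangle. -/
def decompP (X : D) : Prop :=
  ∃ (a1 b1 : D) (f : a1 ⟶ X) (g : X ⟶ b1) (d : b1 ⟶ a1⟦(1:ℤ)⟧),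
    A.P a1 ∧ B.P b1 ∧ Triangle.mk f g d ∈ distTriang D

variable {A B}

section Basic

variable (horth : ∀ (X Y : D), A.P X → B.P Y → ∀ f : X ⟶ Y, f = 0)

include horth

/-- Lifting a map into `X` through the `A`-part of a decomposition. -/
lemma lift_exists {a1 b1 X : D} {f : a1 ⟶ X} {g : X ⟶ b1} {d : b1 ⟶ a1⟦(1:ℤ)⟧}
    (hT : Triangle.mk f g d ∈ distTriang D) (hb1 : B.P b1)
    {W : D} (hW : A.P W) (t : W ⟶ X) : ∃ z : W ⟶ a1, z ≫ f = t := by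
  obtain ⟨z, hz⟩ := Triangle.coyoneda_exact₂ _ hT t (horth _ _ hW hb1 _)
  exact ⟨z, hz.symm⟩

lemma lift_zero {a1 b1 X : D} {f : a1 ⟶ X} {g : X ⟶ b1} {d : b1 ⟶ a1⟦(1:ℤ)⟧}
    (hT : Triangle.mk f g d ∈ distTriang D) (hb1 : B.P b1)
    {W : D} (hW : A.P W) (z : W ⟶ a1) (hz : z ≫ f = 0) : z = 0 := by
  obtain ⟨y, hy⟩ := Triangle.coyoneda_exact₂ _ (inv_rot_of_distTriang _ hT) z hz
  rw [hy, horth _ _ hW (B.shift b1 (-1) hb1) y]; exact zero_comp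

lemma lift_unique {a1 b1 X : D} {f : a1 ⟶ X} {g : X ⟶ b1} {d : b1 ⟶ a1⟦(1:ℤ)⟧}
    (hT : Triangle.mk f g d ∈ distTriang D) (hb1 : B.P b1)
    {W : D} (hW : A.P W) (z z' : W ⟶ a1) (hzz : z ≫ f = z' ≫ f) : z = z' := by
  have := lift_zero horth hT hb1 hW (z - z') (by rw [Preadditive.sub_comp, hzz, sub_self])
  rwa [sub_eq_zero] at this

lemma descend_exists {a1 b1 X : D} {f : a1 ⟶ X} {g : X ⟶ b1} {d : b1 ⟶ a1⟦(1:ℤ)⟧}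
    (hT : Triangle.mk f g d ∈ distTriang D) (ha1 : A.P a1)
    {W : D} (hW : B.P W) (t : X ⟶ W) : ∃ z : b1 ⟶ W, g ≫ z = t := by
  obtain ⟨z, hz⟩ := Triangle.yoneda_exact₂ _ hT t (horth _ _ ha1 hW _)
  exact ⟨z, hz.symm⟩

lemma descend_zero {a1 b1 X : D} {f : a1 ⟶ X} {g : X ⟶ b1} {d : b1 ⟶ a1⟦(1:ℤ)⟧}
    (hT : Triangle.mk f g d ∈ distTriang D) (ha1 : A.P a1)
    {W : D} (hW : B.P W) (z : b1 ⟶ W) (hz : g ≫ z = 0) : z = 0 := by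
  obtain ⟨y, hy⟩ := Triangle.yoneda_exact₃ _ hT z hz
  rw [hy, horth _ _ (A.shift a1 1 ha1) hW y]; exact comp_zero

lemma descend_unique {a1 b1 X : D} {f : a1 ⟶ X} {g : X ⟶ b1} {d : b1 ⟶ a1⟦(1:ℤ)⟧}
    (hT : Triangle.mk f g d ∈ distTriang D) (ha1 : A.P a1)
    {W : D} (hW : B.P W) (z z' : b1 ⟶ W) (hzz : g ≫ z = g ≫ z') : z = z' := by
  have := descend_zero horth hT ha1 hW (z - z') (by rw [Preadditive.comp_sub, hzz, sub_self])
  rwa [sub_eq_zero] at this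

end Basic

section Wrappers

variable {X Y Z : D}

lemma coyoneda_exact₂' {a : X ⟶ Y} {b : Y ⟶ Z} {c : Z ⟶ X⟦(1:ℤ)⟧}
    (hT : Triangle.mk a b c ∈ distTriang D) {W : D} (f : W ⟶ Y) (hf : f ≫ b = 0) :
    ∃ z : W ⟶ X, f = z ≫ a :=
  Triangle.coyoneda_exact₂ _ hT f hf

lemma coyoneda_exact₃' {a : X ⟶ Y} {b : Y ⟶ Z} {c : Z ⟶ X⟦(1:ℤ)⟧}
    (hT : Triangle.mk a b c ∈ distTriang D) {W : D} (f : W ⟶ Z) (hf : f ≫ c = 0) :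
    ∃ z : W ⟶ Y, f = z ≫ b :=
  Triangle.coyoneda_exact₃ _ hT f hf

lemma yoneda_exact₂' {a : X ⟶ Y} {b : Y ⟶ Z} {c : Z ⟶ X⟦(1:ℤ)⟧}
    (hT : Triangle.mk a b c ∈ distTriang D) {W : D} (f : Y ⟶ W) (hf : a ≫ f = 0) :
    ∃ z : Z ⟶ W, f = b ≫ z :=
  Triangle.yoneda_exact₂ _ hT f hf

lemma yoneda_exact₃' {a : X ⟶ Y} {b : Y ⟶ Z} {c : Z ⟶ X⟦(1:ℤ)⟧}
    (hT : Triangle.mk a b c ∈ distTriang D) {W : D} (f : Z ⟶ W) (hf : b ≫ f = 0) :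
    ∃ z : X⟦(1:ℤ)⟧ ⟶ W, f = c ≫ z :=
  Triangle.yoneda_exact₃ _ hT f hf

lemma complete₂' {X' Y' Z' : D} {a : X ⟶ Y} {b : Y ⟶ Z} {c : Z ⟶ X⟦(1:ℤ)⟧}
    {a' : X' ⟶ Y'} {b' : Y' ⟶ Z'} {c' : Z' ⟶ X'⟦(1:ℤ)⟧}
    (hT : Triangle.mk a b c ∈ distTriang D) (hT' : Triangle.mk a' b' c' ∈ distTriang D)
    (f : X ⟶ X') (g : Z ⟶ Z') (comm : c ≫ f⟦(1:ℤ)⟧' = g ≫ c') :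
    ∃ m : Y ⟶ Y', a ≫ m = f ≫ a' ∧ b ≫ g = m ≫ b' :=
  complete_distinguished_triangle_morphism₂ _ _ hT hT' f g comm

end Wrappers

section Ext2

variable [ObjectProperty.IsClosedUnderIsomorphisms A.P] [ObjectProperty.IsClosedUnderIsomorphisms B.P]
variable (horth : ∀ (X Y : D), A.P X → B.P Y → ∀ f : X ⟶ Y, f = 0)

include horth

lemma decompP_ext₂ (T : Triangle D) (hT' : T ∈ distTriang D)
    (h1 : decompP A B T.obj₁) (h3 : decompP A B T.obj₃) :
    decompP A B T.obj₂ := by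
  obtain ⟨A₁, B₁, a₁, x₁, d₁, hA₁, hB₁, hT₁⟩ := h1
  obtain ⟨A₃, B₃, a₃, x₃, d₃, hA₃, hB₃, hT₃⟩ := h3
  have hT : Triangle.mk T.mor₁ T.mor₂ T.mor₃ ∈ distTriang D := hT'
  -- rotated twice versions
  have hT₁rr : Triangle.mk d₁ (-(a₁⟦(1:ℤ)⟧')) (-(x₁⟦(1:ℤ)⟧')) ∈ distTriang D :=
    rot_of_distTriang _ (rot_of_distTriang _ hT₁)
  have hT₃rr : Triangle.mk d₃ (-(a₃⟦(1:ℤ)⟧')) (-(x₃⟦(1:ℤ)⟧')) ∈ distTriang D :=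
    rot_of_distTriang _ (rot_of_distTriang _ hT₃)
  have hTrr : Triangle.mk T.mor₃ (-(T.mor₁⟦(1:ℤ)⟧')) (-(T.mor₂⟦(1:ℤ)⟧')) ∈ distTriang D :=
    rot_of_distTriang _ (rot_of_distTriang _ hT)
  have hvw : T.mor₂ ≫ T.mor₃ = 0 := comp_distTriang_mor_zero₂₃ _ hT'
  -- Step 1 : the connecting map `g : A₃ ⟶ A₁⟦1⟧`
  obtain ⟨g', hg'⟩ := coyoneda_exact₃' hT₁rr (a₃ ≫ T.mor₃) (by
    have hz : a₃ ≫ T.mor₃ ≫ x₁⟦(1:ℤ)⟧' = 0 := horth _ _ hA₃ (B.shift B₁ 1 hB₁) _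
    rw [Preadditive.comp_neg, neg_eq_zero, assoc, hz])
  have hg : (-g') ≫ a₁⟦(1:ℤ)⟧' = a₃ ≫ T.mor₃ := by
    rw [Preadditive.neg_comp, ← Preadditive.comp_neg, ← hg']
  -- Step 2 : extension `A₂` of `A₃` by `A₁`
  obtain ⟨A₂, i, p, hTA⟩ := distinguished_cocone_triangle₂ (-g')
  have hA₂ : A.P A₂ := A.ext₂ _ hTA hA₁ hA₃
  have hTArr : Triangle.mk (-g') (-(i⟦(1:ℤ)⟧')) (-(p⟦(1:ℤ)⟧')) ∈ distTriang D :=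
    rot_of_distTriang _ (rot_of_distTriang _ hTA)
  have hgi : (-g') ≫ i⟦(1:ℤ)⟧' = 0 := comp_distTriang_mor_zero₃₁ _ hTA
  -- Step 3 : `a₂ : A₂ ⟶ T.obj₂`
  obtain ⟨a₂, ha₂₁, ha₂₂⟩ := complete₂' hTA hT a₁ a₃ hg
  -- Step 4 : the connecting map `h : B₃ ⟶ B₁⟦1⟧`
  obtain ⟨h, hh⟩ := yoneda_exact₂' hT₃ (T.mor₃ ≫ x₁⟦(1:ℤ)⟧')
    (horth _ _ hA₃ (B.shift B₁ 1 hB₁) _)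
  -- Step 5 : extension `B₂` of `B₃` by `B₁`
  obtain ⟨B₂, e, s, hTB⟩ := distinguished_cocone_triangle₂ h
  have hB₂ : B.P B₂ := B.ext₂ _ hTB hB₁ hB₃
  have hsh : s ≫ h = 0 := comp_distTriang_mor_zero₂₃ _ hTB
  -- Step 6 : `b₂ : T.obj₂ ⟶ B₂`
  obtain ⟨b₂, hb₂₁, hb₂₂⟩ := complete₂' hT hTB x₁ x₃ hh
  -- Step 7 : the cone `C` of `a₂`
  obtain ⟨C, q, r, hTC⟩ := distinguished_cocone_triangle a₂
  have ha₂q : a₂ ≫ q = 0 := comp_distTriang_mor_zero₁₂ _ hTC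
  have hra₂ : r ≫ a₂⟦(1:ℤ)⟧' = 0 := comp_distTriang_mor_zero₃₁ _ hTC
  -- Step 8 : every map from an object of `A` to `C` vanishes
  have hO : ∀ (W : D), A.P W → ∀ y : W ⟶ C, y = 0 := by
    intro W hW y
    have hz : (y ≫ r) ≫ a₂⟦(1:ℤ)⟧' = 0 := by rw [assoc, hra₂, comp_zero]
    have hz0 : y ≫ r = 0 := by
      have h1 : ((y ≫ r) ≫ p⟦(1:ℤ)⟧') ≫ (-(a₃⟦(1:ℤ)⟧')) = 0 := by
        rw [Preadditive.comp_neg, neg_eq_zero, assoc, ← Functor.map_comp, ha₂₂,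
          Functor.map_comp, ← assoc, hz, zero_comp]
      obtain ⟨f1, hf1⟩ := coyoneda_exact₂' hT₃rr ((y ≫ r) ≫ p⟦(1:ℤ)⟧') h1
      have h2 : (y ≫ r) ≫ p⟦(1:ℤ)⟧' = 0 := by
        rw [hf1, horth _ _ hW hB₃ f1, zero_comp]
      obtain ⟨z₁', hz₁'⟩ := coyoneda_exact₃' hTArr (y ≫ r) (by
        rw [Preadditive.comp_neg, h2, neg_zero])
      have hz₁ : y ≫ r = (-z₁') ≫ i⟦(1:ℤ)⟧' := by
        rw [Preadditive.neg_comp, ← Preadditive.comp_neg, ← hz₁']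
      have h3 : ((-z₁') ≫ a₁⟦(1:ℤ)⟧') ≫ (-(T.mor₁⟦(1:ℤ)⟧')) = 0 := by
        rw [Preadditive.comp_neg, neg_eq_zero, assoc, ← Functor.map_comp, ← ha₂₁,
          Functor.map_comp, ← assoc, ← hz₁, hz]
      obtain ⟨t₃, ht₃⟩ := coyoneda_exact₂' hTrr ((-z₁') ≫ a₁⟦(1:ℤ)⟧') h3
      obtain ⟨s₃, hs₃⟩ := coyoneda_exact₂' hT₃ t₃ (horth _ _ hW hB₃ _)
      have h4 : ((-z₁') - s₃ ≫ (-g')) ≫ (-(a₁⟦(1:ℤ)⟧')) = 0 := by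
        rw [Preadditive.comp_neg, neg_eq_zero, Preadditive.sub_comp, assoc, hg, ← assoc,
          ← hs₃, ← ht₃, sub_self]
      obtain ⟨f2, hf2⟩ := coyoneda_exact₂' hT₁rr ((-z₁') - s₃ ≫ (-g')) h4
      have h5 : (-z₁') = s₃ ≫ (-g') := by
        have h6 : (-z₁') - s₃ ≫ (-g') = 0 := by rw [hf2, horth _ _ hW hB₁ f2, zero_comp]
        rwa [sub_eq_zero] at h6
      rw [hz₁, h5, assoc, hgi, comp_zero]
    obtain ⟨y₂, hy₂⟩ := coyoneda_exact₃' hTC y hz0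
    obtain ⟨t₃, ht₃⟩ := coyoneda_exact₂' hT₃ (y₂ ≫ T.mor₂)
      (by rw [assoc]; exact horth _ _ hW hB₃ _)
    have h2 : (t₃ ≫ (-g')) ≫ (-(a₁⟦(1:ℤ)⟧')) = 0 := by
      rw [Preadditive.comp_neg, neg_eq_zero, assoc, hg, ← assoc, ← ht₃, assoc, hvw, comp_zero]
    obtain ⟨f2, hf2⟩ := coyoneda_exact₂' hT₁rr (t₃ ≫ (-g')) h2
    have h3 : t₃ ≫ (-g') = 0 := by rw [hf2, horth _ _ hW hB₁ f2, zero_comp]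
    obtain ⟨z₁, hz₁⟩ := coyoneda_exact₃' hTA t₃ h3
    obtain ⟨t₁, ht₁⟩ := coyoneda_exact₂' hT (y₂ - z₁ ≫ a₂) (by
      rw [Preadditive.sub_comp, assoc, ← ha₂₂, ← assoc, ← hz₁, ht₃, sub_self])
    obtain ⟨w₁, hw₁⟩ := coyoneda_exact₂' hT₁ t₁ (horth _ _ hW hB₁ _)
    have hy₂' : y₂ = (z₁ + w₁ ≫ i) ≫ a₂ := by
      rw [Preadditive.add_comp, assoc, ha₂₁, ← assoc, ← hw₁, ← ht₁]
      abel
    rw [hy₂, hy₂', assoc, ha₂q, comp_zero]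
  -- Step 9 : `n : C ⟶ B₂` with `q ≫ n = b₂`
  obtain ⟨n, hn⟩ := yoneda_exact₂' hTC b₂ (horth _ _ hA₂ hB₂ _)
  -- Step 10 : `c₁ : B₁ ⟶ C`
  obtain ⟨c₁, hc₁⟩ := yoneda_exact₂' hT₁ (T.mor₁ ≫ q) (by
    rw [← assoc, ← ha₂₁, assoc, ha₂q, comp_zero])
  -- Step 11 : `n' : B₂ ⟶ C` with `e ≫ n' = c₁`
  have nat : ∀ {P Q : D} (f : P ⟶ Q),
      (f⟦(1:ℤ)⟧')⟦(-1:ℤ)⟧' ≫ (shiftEquiv D (1:ℤ)).unitIso.inv.app Q =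
        (shiftEquiv D (1:ℤ)).unitIso.inv.app P ≫ f := by
    intro P Q f
    exact (shiftEquiv D (1:ℤ)).unitIso.inv.naturality f
  have nat' : ∀ {P Q : D} (f : P ⟶ Q) {R : D} (k : Q ⟶ R),
      (f⟦(1:ℤ)⟧')⟦(-1:ℤ)⟧' ≫ (shiftEquiv D (1:ℤ)).unitIso.inv.app Q ≫ k =
        (shiftEquiv D (1:ℤ)).unitIso.inv.app P ≫ f ≫ k := by
    intro P Q f R k
    erw [← assoc, nat f, assoc]; rfl
  have hP1 : x₃⟦(-1:ℤ)⟧' ≫ h⟦(-1:ℤ)⟧' ≫ (shiftEquiv D (1:ℤ)).unitIso.inv.app B₁ ≫ c₁ = 0 := by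
    calc x₃⟦(-1:ℤ)⟧' ≫ h⟦(-1:ℤ)⟧' ≫ (shiftEquiv D (1:ℤ)).unitIso.inv.app B₁ ≫ c₁
        = (x₃ ≫ h)⟦(-1:ℤ)⟧' ≫ (shiftEquiv D (1:ℤ)).unitIso.inv.app B₁ ≫ c₁ := by
          rw [Functor.map_comp, assoc]
      _ = T.mor₃⟦(-1:ℤ)⟧' ≫ ((x₁⟦(1:ℤ)⟧')⟦(-1:ℤ)⟧' ≫
            (shiftEquiv D (1:ℤ)).unitIso.inv.app B₁) ≫ c₁ := by
          rw [← hh, Functor.map_comp, assoc]; congr 1; exact (assoc _ _ _).symm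
      _ = T.mor₃⟦(-1:ℤ)⟧' ≫ (shiftEquiv D (1:ℤ)).unitIso.inv.app T.obj₁ ≫ T.mor₁ ≫ q := by
          erw [nat x₁, assoc, ← hc₁]
      _ = T.mor₃⟦(-1:ℤ)⟧' ≫ (T.mor₁⟦(1:ℤ)⟧')⟦(-1:ℤ)⟧' ≫
            (shiftEquiv D (1:ℤ)).unitIso.inv.app T.obj₂ ≫ q := by
          rw [nat' T.mor₁ q]; rfl
      _ = (T.mor₃ ≫ T.mor₁⟦(1:ℤ)⟧')⟦(-1:ℤ)⟧' ≫
            (shiftEquiv D (1:ℤ)).unitIso.inv.app T.obj₂ ≫ q := by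
          rw [Functor.map_comp, assoc]
      _ = 0 := by
          rw [comp_distTriang_mor_zero₃₁ _ hT', Functor.map_zero, zero_comp]
  have hT₃s : Triangle.mk ((-1:ℤ).negOnePow • a₃⟦(-1:ℤ)⟧') ((-1:ℤ).negOnePow • x₃⟦(-1:ℤ)⟧')
      ((-1:ℤ).negOnePow • d₃⟦(-1:ℤ)⟧' ≫ (shiftFunctorComm D 1 (-1)).hom.app A₃) ∈
        distTriang D :=
    Triangle.shift_distinguished _ hT₃ (-1)
  obtain ⟨f', hf'⟩ := yoneda_exact₃' hT₃s
    (h⟦(-1:ℤ)⟧' ≫ (shiftEquiv D (1:ℤ)).unitIso.inv.app B₁ ≫ c₁) (by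
      rw [Linear.units_smul_comp, hP1, smul_zero])
  have hP : h⟦(-1:ℤ)⟧' ≫ (shiftEquiv D (1:ℤ)).unitIso.inv.app B₁ ≫ c₁ = 0 := by
    rw [hf', hO _ (A.shift _ 1 (A.shift _ (-1) hA₃)) f', comp_zero]
  have hTBi : Triangle.mk (-(h⟦(-1:ℤ)⟧' ≫ (shiftEquiv D (1:ℤ)).unitIso.inv.app B₁)) e
      (s ≫ (shiftEquiv D (1:ℤ)).counitIso.inv.app B₃) ∈ distTriang D :=
    inv_rot_of_distTriang _ hTB
  obtain ⟨n', hn'⟩ := yoneda_exact₂' hTBi c₁ (by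
    erw [Preadditive.neg_comp, assoc, hP, neg_zero])
  -- Step 12 : `n ≫ (n' - s ≫ χ) = 𝟙 C`
  obtain ⟨φ, hφ⟩ := yoneda_exact₂' hT (b₂ ≫ n' - q) (by
    rw [Preadditive.comp_sub, ← assoc, hb₂₁, assoc, ← hn', ← hc₁, sub_self])
  obtain ⟨χ, hχ⟩ := yoneda_exact₂' hT₃ φ (hO _ hA₃ _)
  have e1 : b₂ ≫ n' - q = (b₂ ≫ s) ≫ χ := by rw [hφ, hχ, ← assoc, hb₂₂]
  have hq0 : q ≫ (n ≫ (n' - s ≫ χ)) = q := by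
    simp only [Preadditive.comp_sub, ← assoc, ← hn]
    rw [← e1]
    abel
  obtain ⟨θ, hθ⟩ := yoneda_exact₃' hTC (n ≫ (n' - s ≫ χ) - 𝟙 C) (by
    rw [Preadditive.comp_sub, hq0, comp_id, sub_self])
  have hnn' : n ≫ (n' - s ≫ χ) = 𝟙 C := by
    have h0 : n ≫ (n' - s ≫ χ) - 𝟙 C = 0 := by
      rw [hθ, hO _ (A.shift _ 1 hA₂) θ, comp_zero]
    rwa [sub_eq_zero] at h0
  -- Step 13/14 : `(n' - s ≫ χ) ≫ n = 𝟙 B₂`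
  set σ : B₂ ⟶ B₂ := 𝟙 B₂ - (n' - s ≫ χ) ≫ n with hσdef
  have hbσ : b₂ ≫ σ = 0 := by
    rw [hσdef, Preadditive.comp_sub, comp_id, hn, assoc, ← assoc n, hnn', id_comp, sub_self]
  have heσ : e ≫ σ = 0 := by
    have h1 : x₁ ≫ e ≫ σ = 0 := by rw [← assoc, ← hb₂₁, assoc, hbσ, comp_zero]
    obtain ⟨f₁, hf₁⟩ := yoneda_exact₃' hT₁ (e ≫ σ) h1
    rw [hf₁, horth _ _ (A.shift A₁ 1 hA₁) hB₂ f₁, comp_zero]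
  obtain ⟨τ, hτ⟩ := yoneda_exact₂' hTB σ heσ
  obtain ⟨f₂, hf₂⟩ := yoneda_exact₃' hT (x₃ ≫ τ) (by
    rw [← assoc, hb₂₂, assoc, ← hτ, hbσ])
  obtain ⟨f₃, hf₃⟩ := yoneda_exact₃' hT₁rr f₂ (by
    rw [Preadditive.neg_comp, horth _ _ (A.shift A₁ 1 hA₁) hB₂ (a₁⟦(1:ℤ)⟧' ≫ f₂), neg_zero])
  obtain ⟨f₄, hf₄⟩ := yoneda_exact₃' hT₃ (τ + h ≫ f₃) (by
    rw [Preadditive.comp_add, hf₂, hf₃, Preadditive.neg_comp, Preadditive.comp_neg, ← assoc,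
      hh, assoc, neg_add_cancel])
  have hτ' : τ = -(h ≫ f₃) := by
    refine eq_neg_of_add_eq_zero_left ?_
    rw [hf₄, horth _ _ (A.shift A₃ 1 hA₃) hB₂ f₄, comp_zero]
  have hσ0 : σ = 0 := by
    rw [hτ, hτ', Preadditive.comp_neg, ← assoc, hsh, zero_comp, neg_zero]
  have hinv : (n' - s ≫ χ) ≫ n = 𝟙 B₂ := by
    rw [hσdef] at hσ0
    rwa [sub_eq_zero, eq_comm] at hσ0
  have : IsIso n := ⟨n' - s ≫ χ, hnn', hinv⟩
  have hC : B.P C := ObjectProperty.prop_of_iso B.P (asIso n).symm hB₂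
  exact ⟨A₂, C, a₂, q, r, hA₂, hC, hTC⟩


end Ext2

section Functors

variable (A B) in
/-- A family of decomposition triangles, one for each object. -/
structure DecompFamily where
  a1 : D → D
  b1 : D → D
  fa : ∀ X, a1 X ⟶ X
  gb : ∀ X, X ⟶ b1 X
  dd : ∀ X, b1 X ⟶ (a1 X)⟦(1:ℤ)⟧
  ha : ∀ X, A.P (a1 X)
  hb : ∀ X, B.P (b1 X)
  hdist : ∀ X, Triangle.mk (fa X) (gb X) (dd X) ∈ distTriang D

variable (E : DecompFamily A B)
variable (horth : ∀ (X Y : D), A.P X → B.P Y → ∀ f : X ⟶ Y, f = 0)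

include horth

/-- Lift of a morphism through the `A`-part. -/
noncomputable def liftA {W X : D} (hW : A.P W) (t : W ⟶ X) : W ⟶ E.a1 X :=
  (lift_exists horth (E.hdist X) (E.hb X) hW t).choose

lemma liftA_comp {W X : D} (hW : A.P W) (t : W ⟶ X) :
    liftA E horth hW t ≫ E.fa X = t :=
  (lift_exists horth (E.hdist X) (E.hb X) hW t).choose_spec

lemma liftA_comp_assoc {W X Y : D} (hW : A.P W) (t : W ⟶ X) (k : X ⟶ Y) :
    liftA E horth hW t ≫ E.fa X ≫ k = t ≫ k := by
  rw [← assoc, liftA_comp]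

lemma liftA_unique {W X : D} (hW : A.P W) (z z' : W ⟶ E.a1 X)
    (h : z ≫ E.fa X = z' ≫ E.fa X) : z = z' :=
  lift_unique horth (E.hdist X) (E.hb X) hW z z' h

/-- Descent of a morphism through the `B`-part. -/
noncomputable def descB {W X : D} (hW : B.P W) (t : X ⟶ W) : E.b1 X ⟶ W :=
  (descend_exists horth (E.hdist X) (E.ha X) hW t).choose

lemma descB_comp {W X : D} (hW : B.P W) (t : X ⟶ W) :
    E.gb X ≫ descB E horth hW t = t :=
  (descend_exists horth (E.hdist X) (E.ha X) hW t).choose_spec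

lemma descB_comp_assoc {W X Y : D} (hW : B.P W) (t : X ⟶ W) (k : W ⟶ Y) :
    E.gb X ≫ descB E horth hW t ≫ k = t ≫ k := by
  rw [← assoc, descB_comp]

lemma descB_unique {W X : D} (hW : B.P W) (z z' : E.b1 X ⟶ W)
    (h : E.gb X ≫ z = E.gb X ≫ z') : z = z' :=
  descend_unique horth (E.hdist X) (E.ha X) hW z z' h

/-- The coreflection `D ⥤ A`. -/
noncomputable def iotaF : D ⥤ ObjectProperty.FullSubcategory A.P where
  obj X := ⟨E.a1 X, E.ha X⟩
  map {X Y} φ := ObjectProperty.homMk (liftA E horth (E.ha X) (E.fa X ≫ φ))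
  map_id X := by ext; exact liftA_unique E horth (E.ha X) _ _ (by
    show liftA E horth (E.ha X) (E.fa X ≫ 𝟙 X) ≫ E.fa X = 𝟙 (E.a1 X) ≫ E.fa X
    rw [liftA_comp, comp_id, id_comp])
  map_comp {X Y Z} φ ψ := by ext; exact liftA_unique E horth (E.ha X) _ _ (by
    show liftA E horth (E.ha X) (E.fa X ≫ φ ≫ ψ) ≫ E.fa Z =
      (liftA E horth (E.ha X) (E.fa X ≫ φ) ≫ liftA E horth (E.ha Y) (E.fa Y ≫ ψ)) ≫ E.fa Z
    simp only [assoc, liftA_comp, liftA_comp_assoc])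

/-- The reflection `D ⥤ B`. -/
noncomputable def jayF : D ⥤ ObjectProperty.FullSubcategory B.P where
  obj X := ⟨E.b1 X, E.hb X⟩
  map {X Y} φ := ObjectProperty.homMk (descB E horth (E.hb Y) (φ ≫ E.gb Y))
  map_id X := by ext; exact descB_unique E horth (E.hb X) _ _ (by
    show E.gb X ≫ descB E horth (E.hb X) (𝟙 X ≫ E.gb X) = E.gb X ≫ 𝟙 (E.b1 X)
    rw [descB_comp, comp_id, id_comp])
  map_comp {X Y Z} φ ψ := by ext; exact descB_unique E horth (E.hb Z) _ _ (by
    show E.gb X ≫ descB E horth (E.hb Z) ((φ ≫ ψ) ≫ E.gb Z) =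
      E.gb X ≫ (descB E horth (E.hb Y) (φ ≫ E.gb Y) ≫ descB E horth (E.hb Z) (ψ ≫ E.gb Z))
    simp only [assoc, descB_comp, descB_comp_assoc])

/-- The adjunction `inclusion ⊣ iotaF`. -/
noncomputable def adjA : ObjectProperty.ι A.P ⊣ iotaF E horth :=
  Adjunction.mkOfHomEquiv
    { homEquiv := fun W X =>
        { toFun := fun t => ObjectProperty.homMk (liftA E horth W.property t)
          invFun := fun z => z.hom ≫ E.fa X
          left_inv := fun t => liftA_comp E horth W.property t
          right_inv := by intro z; apply ObjectProperty.hom_ext; exact liftA_unique E horth W.property _ _ (liftA_comp E horth W.property _) }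
      homEquiv_naturality_left_symm := fun {X' X Y} f g => by
        apply Category.assoc
      homEquiv_naturality_right := fun {X Y Y'} g f => by
        ext; exact liftA_unique E horth X.property _ _ (by
          show liftA E horth X.property (g ≫ f) ≫ E.fa Y' =
            (liftA E horth X.property g ≫ liftA E horth (E.ha Y) (E.fa Y ≫ f)) ≫ E.fa Y'
          simp only [assoc, liftA_comp, liftA_comp_assoc]) }

/-- The adjunction `jayF ⊣ inclusion`. -/
noncomputable def adjB : jayF E horth ⊣ ObjectProperty.ι B.P :=
  Adjunction.mkOfHomEquiv
    { homEquiv := fun X W =>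
        { toFun := fun z => E.gb X ≫ z.hom
          invFun := fun t => ObjectProperty.homMk (descB E horth W.property t)
          left_inv := by intro z; apply ObjectProperty.hom_ext; exact descB_unique E horth W.property _ _ (descB_comp E horth W.property _)
          right_inv := fun t => descB_comp E horth W.property t }
      homEquiv_naturality_left_symm := fun {X' X Y} f g => by
        ext; exact descB_unique E horth Y.property _ _ (by
          show E.gb X' ≫ descB E horth Y.property (f ≫ g) =
            E.gb X' ≫ (descB E horth (E.hb X) (f ≫ E.gb X) ≫ descB E horth Y.property g)
          simp only [assoc, descB_comp, descB_comp_assoc])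
      homEquiv_naturality_right := fun {X Y Y'} g f => by
        have h0 : (E.gb X ≫ g.hom) ≫ f.hom =
            E.gb X ≫ (g.hom ≫ f.hom) := assoc _ _ _
        exact h0.symm }

lemma adjA_counit_app (X : D) : (adjA E horth).counit.app X = E.fa X := by
  simp only [adjA, Adjunction.mkOfHomEquiv_counit_app, Equiv.coe_fn_symm_mk]
  exact id_comp (E.fa X)

lemma adjB_unit_app (X : D) : (adjB E horth).unit.app X = E.gb X := by
  simp only [adjB, Adjunction.mkOfHomEquiv_unit_app, Equiv.coe_fn_mk]
  exact comp_id (E.gb X)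

end Functors

section Subcat

variable (A B)
variable [ObjectProperty.IsClosedUnderIsomorphisms A.P] [ObjectProperty.IsClosedUnderIsomorphisms B.P]

lemma decompP_zero : decompP A B 0 :=
  ⟨0, 0, 𝟙 0, 0, 0, A.zero, B.zero, contractible_distinguished 0⟩

lemma decompP_shift (X : D) (n : ℤ) (hX : decompP A B X) : decompP A B (X⟦n⟧) := by
  obtain ⟨a1, b1, f, g, d, ha, hb, hT⟩ := hX
  exact ⟨a1⟦n⟧, b1⟦n⟧, n.negOnePow • f⟦n⟧', n.negOnePow • g⟦n⟧',
    n.negOnePow • d⟦n⟧' ≫ (shiftFunctorComm D 1 n).hom.app a1,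
    A.shift _ n ha, B.shift _ n hb, Triangle.shift_distinguished _ hT n⟩

lemma decompP_of_A {X : D} (hX : A.P X) : decompP A B X :=
  ⟨X, 0, 𝟙 X, 0, 0, hX, B.zero, contractible_distinguished X⟩

lemma decompP_of_B {X : D} (hX : B.P X) : decompP A B X :=
  ⟨0, X, 0, 𝟙 X, 0, A.zero, hX, contractible_distinguished₁ X⟩

end Subcat

end AdmissiblePairAux

open AdmissiblePairAux in
/-- Bondal–Kapranov: if `(𝒜, ℬ)` is an admissible pair in a triangulated
category `𝒟` (i.e. `Hom(A,B) = 0` for `A ∈ 𝒜`, `B ∈ ℬ`, and `𝒜`, `ℬ` together generate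
`𝒟`), then the inclusion of `𝒜` admits a right adjoint `ι`, the inclusion of `ℬ` admits
a left adjoint `jB`, and every `X` fits in a distinguished triangle `ι X ⟶ X ⟶ jB X ⟶`. -/
theorem admissible_pair_adjoints_and_triangle
    (D : Type*) [Category D] [HasZeroObject D] [Preadditive D] [HasShift D ℤ]
    [∀ n : ℤ, (shiftFunctor D n).Additive] [Pretriangulated D]
    (A B : Triangulated.Subcategory D)
    [ObjectProperty.IsClosedUnderIsomorphisms A.P] [ObjectProperty.IsClosedUnderIsomorphisms B.P]
    (horth : ∀ (X Y : D), A.P X → B.P Y → ∀ f : X ⟶ Y, f = 0)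
    (hgen : ∀ (T : Triangulated.Subcategory D), ObjectProperty.IsClosedUnderIsomorphisms T.P →
      (∀ X, A.P X → T.P X) → (∀ X, B.P X → T.P X) → ∀ X, T.P X) :
    ∃ (ι : D ⥤ ObjectProperty.FullSubcategory A.P) (adj₁ : ObjectProperty.ι A.P ⊣ ι)
      (jB : D ⥤ ObjectProperty.FullSubcategory B.P) (adj₂ : jB ⊣ ObjectProperty.ι B.P),
      ∀ X : D,
        ∃ δ : (ObjectProperty.ι B.P).obj (jB.obj X) ⟶
            ((ObjectProperty.ι A.P).obj (ι.obj X))⟦(1 : ℤ)⟧,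
          Triangle.mk (adj₁.counit.app X) (adj₂.unit.app X) δ ∈ distTriang D := by
  have hall : ∀ X, decompP A B X := by
    refine hgen (Triangulated.Subcategory.mk' (decompP A B)
      (decompP_zero A B) (decompP_shift A B)
      (fun T hT h1 h3 => decompP_ext₂ horth T hT h1 h3)) inferInstance ?_ ?_
    · intro X hX
      exact decompP_of_A A B hX
    · intro X hX
      exact decompP_of_B A B hX
  choose a1 b1 fa gb dd ha hb hdist using hall
  let E : DecompFamily A B := ⟨a1, b1, fa, gb, dd, ha, hb, hdist⟩
  refine ⟨iotaF E horth, adjA E horth, jayF E horth, adjB E horth, fun X => ?_⟩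
  refine ⟨E.dd X, ?_⟩
  rw [adjA_counit_app, adjB_unit_app]
  exact E.hdist X
end

section
/- Let 𝒟 be a triangulated category, N an object, and suppose [P] ∈ {[N_1]} * {[N_2]} * ⋯ * {[N_j]} * {[N]} for objects N_1, …, N_j, N. If Hom^i(N_k, M) = 0 for all i ≤ 0 and all k, and Hom^i(N, M) = 0 for all i < 0, then Hom^i(P, M) = 0 for all i < 0. -/
open CategoryTheory CategoryTheory.Pretriangulated

/-- the inductive vanishing argument of Proposition 3.10: suppose
`[P] ∈ {[N₁]} * ⋯ * {[N_j]} * {[N]}`, i.e. `P ≅ Q j` where `Q 0 ≅ N` and each `Q (k+1)`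
is an extension of `Q k` by `N (k+1)` via a distinguished triangle
`N_{k+1} ⟶ Q (k+1) ⟶ Q k ⟶`.  If `Hom^i(N_k, M) = 0` for all `i ≤ 0` and all `k`, and
`Hom^i(N, M) = 0` for all `i < 0`, then `Hom^i(P, M) = 0` for all `i < 0`. -/
theorem hom_neg_vanishing_of_star_chain
    (D : Type*) [Category D] [Limits.HasZeroObject D] [Preadditive D]
    [HasShift D ℤ] [∀ n : ℤ, (shiftFunctor D n).Additive] [Pretriangulated D]
    (j : ℕ) (Nk : Fin j → D) (N M P : D)
    (Q : ℕ → D) (e₀ : Q 0 ≅ N) (eP : Q j ≅ P)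
    (tri : ∀ k : Fin j, ∃ (f : Nk k ⟶ Q (k + 1)) (g : Q (k + 1) ⟶ Q k)
      (h : Q k ⟶ (Nk k)⟦(1 : ℤ)⟧), Triangle.mk f g h ∈ distTriang D)
    (hNk : ∀ (k : Fin j) (i : ℤ), i ≤ 0 → ∀ ψ : Nk k ⟶ M⟦i⟧, ψ = 0)
    (hN : ∀ i : ℤ, i < 0 → ∀ ψ : N ⟶ M⟦i⟧, ψ = 0) :
    ∀ i : ℤ, i < 0 → ∀ φ : P ⟶ M⟦i⟧, φ = 0 := by
  have key : ∀ k : ℕ, k ≤ j → ∀ i : ℤ, i < 0 → ∀ φ : Q k ⟶ M⟦i⟧, φ = 0 := by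
    intro k
    induction k with
    | zero =>
      intro _ i hi φ
      have := hN i hi (e₀.inv ≫ φ)
      calc φ = e₀.hom ≫ (e₀.inv ≫ φ) := by simp
        _ = 0 := by rw [this]; simp
    | succ k ih =>
      intro hk i hi φ
      obtain ⟨f, g, h, hT⟩ := tri ⟨k, hk⟩
      obtain ⟨ψ, hψ⟩ := Triangle.yoneda_exact₂ _ hT φ (hNk ⟨k, hk⟩ i hi.le _)
      rw [hψ, ih (Nat.le_of_succ_le hk) i hi ψ]; exact Limits.comp_zero
  intro i hi φ
  have := key j le_rfl i hi (eP.hom ≫ φ)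
  calc φ = eP.inv ≫ (eP.hom ≫ φ) := by simp
    _ = 0 := by rw [this]; simp
end
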